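/- arXiv:1909.06606 — 9 statements merged into one kernel-verified Lean document; each statement's English description precedes it below -/
import Mathlib

section
/- Let X, Y, Z be real Banach spaces with continuous injective embeddings j₁ : X → Y and j₂ : Y → Z, let U be an open neighborhood of (0,0) in X × ℝ, let F : X × ℝ → Z be continuously Fréchet differentiable, and let G : U → L(Y,Z) be a continuous map into the bounded linear operators from Y to Z such that G(x,s) ∘ j₁ equals the partial Fréchet derivative ∂ₓF(x,s) for every (x,s) ∈ U. If x : [0,ε) → X is continuous, (x(s),s) ∈ U for all s ∈ [0,ε), and s ↦ j₁(x(s)) is continuously differentiable as a map into Y with derivative y(s), then the Z-valued map s ↦ F(x(s),s) is continuously differentiable on [0,ε) and its derivative is G(x(s),s)[y(s)] + ∂ₛF(x(s),s). -/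
open Set Filter Topology

private lemma ftc_aux {E Z : Type*} [NormedAddCommGroup E] [NormedSpace ℝ E]
    [NormedAddCommGroup Z] [NormedSpace ℝ Z] [CompleteSpace Z]
    {F : E → Z} (hF : ContDiff ℝ 1 F) (q w : E) :
    F (q + w) - F q = ∫ θ in (0:ℝ)..1, fderiv ℝ F (q + θ • w) w := by
  have hd : ∀ θ : ℝ, HasDerivAt (fun θ : ℝ => F (q + θ • w)) (fderiv ℝ F (q + θ • w) w) θ := by
    intro θ
    have h1 : HasDerivAt (fun θ : ℝ => q + θ • w) w θ := by
      simpa using ((hasDerivAt_id θ).smul_const w).const_add q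
    exact ((hF.differentiable one_ne_zero (q + θ • w)).hasFDerivAt).comp_hasDerivAt θ h1
  have hcont : Continuous fun θ : ℝ => fderiv ℝ F (q + θ • w) w := by
    have hcw : Continuous fun θ : ℝ => q + θ • w :=
      continuous_const.add (continuous_id.smul continuous_const)
    exact ((hF.continuous_fderiv one_ne_zero).comp hcw).clm_apply continuous_const
  have h := intervalIntegral.integral_eq_sub_of_hasDerivAt
    (f := fun θ : ℝ => F (q + θ • w)) (f' := fun θ : ℝ => fderiv ℝ F (q + θ • w) w)
    (fun θ _ => hd θ) (hcont.intervalIntegrable 0 1)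
  simpa using h.symm

set_option maxHeartbeats 1000000 in
/-- Differentiating `s ↦ F(x(s), s)` along a curve `x` that is only `C¹` into the
larger space `Y`, where the partial derivative `∂ₓF` admits a continuous extension `G` to `Y`. -/
theorem statement0
    {X Y Z : Type*}
    [NormedAddCommGroup X] [NormedSpace ℝ X] [CompleteSpace X]
    [NormedAddCommGroup Y] [NormedSpace ℝ Y] [CompleteSpace Y]
    [NormedAddCommGroup Z] [NormedSpace ℝ Z] [CompleteSpace Z]
    (j₁ : X →L[ℝ] Y) (j₂ : Y →L[ℝ] Z)
    (hj₁ : Function.Injective j₁) (hj₂ : Function.Injective j₂)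
    (U : Set (X × ℝ)) (hU : IsOpen U) (hU0 : ((0 : X), (0 : ℝ)) ∈ U)
    (F : X × ℝ → Z) (hF : ContDiff ℝ 1 F)
    (G : X × ℝ → (Y →L[ℝ] Z)) (hG : ContinuousOn G U)
    (hGext : ∀ p ∈ U, ∀ v : X, G p (j₁ v) = fderiv ℝ F p (v, 0))
    (ε : ℝ) (hε : 0 < ε)
    (x : ℝ → X) (hx : ContinuousOn x (Set.Ico 0 ε))
    (hxU : ∀ s ∈ Set.Ico (0 : ℝ) ε, (x s, s) ∈ U)
    (y : ℝ → Y)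
    (hy : ∀ s ∈ Set.Ico (0 : ℝ) ε,
      HasDerivWithinAt (fun t => j₁ (x t)) (y s) (Set.Ico 0 ε) s)
    (hycont : ContinuousOn y (Set.Ico 0 ε)) :
    (∀ s ∈ Set.Ico (0 : ℝ) ε,
      HasDerivWithinAt (fun t => F (x t, t))
        (G (x s, s) (y s) + fderiv ℝ F (x s, s) (0, 1)) (Set.Ico 0 ε) s) ∧
    ContinuousOn (fun s => G (x s, s) (y s) + fderiv ℝ F (x s, s) (0, 1))
      (Set.Ico 0 ε) := by
  have hfd : Continuous fun p : X × ℝ => fderiv ℝ F p := hF.continuous_fderiv one_ne_zero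
  constructor
  · intro s hs
    have hqU : (x s, s) ∈ U := hxU s hs
    set q : X × ℝ := (x s, s) with hqdef
    set A : X × ℝ →L[ℝ] Z := fderiv ℝ F q with hAdef
    rw [hasDerivWithinAt_iff_isLittleO, Asymptotics.isLittleO_iff]
    intro c hc
    set Ny : ℝ := ‖y s‖ + 1 with hNydef
    have hNy : 0 < Ny := by positivity
    set NG : ℝ := ‖G q‖ + 1 with hNGdef
    have hNG : 0 < NG := by positivity
    set c₁ : ℝ := c / (3 * Ny) with hc₁def
    set c₂ : ℝ := c / (3 * NG) with hc₂def
    have hc₁ : 0 < c₁ := by positivity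
    have hc₂ : 0 < c₂ := by positivity
    have e1 : c₁ * Ny = c / 3 := by
      rw [hc₁def, div_mul_eq_mul_div, div_eq_div_iff (by positivity) (by norm_num)]; ring
    have e2 : NG * c₂ = c / 3 := by
      rw [hc₂def]; field_simp
    -- choose δ
    have hGq : ContinuousAt G q := hG.continuousAt (hU.mem_nhds hqU)
    have hfdq : ContinuousAt (fun p : X × ℝ => fderiv ℝ F p) q := hfd.continuousAt
    obtain ⟨δ₁, hδ₁, hGball⟩ := Metric.continuousAt_iff.1 hGq c₁ hc₁
    obtain ⟨δ₂, hδ₂, hfdball⟩ := Metric.continuousAt_iff.1 hfdq (c / 3) (by positivity)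
    obtain ⟨δ₃, hδ₃, hUball⟩ := Metric.isOpen_iff.1 hU q hqU
    set δ : ℝ := min δ₁ (min δ₂ δ₃) with hδdef
    have hδ : 0 < δ := lt_min hδ₁ (lt_min hδ₂ hδ₃)
    -- eventual facts
    have hten : Tendsto (fun t => ((x t, t) : X × ℝ)) (𝓝[Set.Ico 0 ε] s) (𝓝 q) :=
      (hx s hs).prodMk (continuousWithinAt_id)
    have ev1 : ∀ᶠ t in 𝓝[Set.Ico 0 ε] s, dist ((x t, t) : X × ℝ) q < δ :=
      Metric.tendsto_nhds.1 hten δ hδ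
    have hylo := hasDerivWithinAt_iff_isLittleO.1 (hy s hs)
    have ev2 := Asymptotics.isLittleO_iff.1 hylo (lt_min hc₂ one_pos)
    filter_upwards [ev1, ev2] with t hdist hyb
    set w : X × ℝ := (x t - x s, t - s) with hwdef
    have hwq : q + w = (x t, t) := by
      simp [hqdef, hwdef, Prod.mk_add_mk]
    have hwlt : ‖w‖ < δ := by
      rw [dist_eq_norm] at hdist
      simpa [hqdef, hwdef, Prod.mk_sub_mk] using hdist
    set u : Y := j₁ (x t) - j₁ (x s) with hudef
    have hu1 : ‖u - (t - s) • y s‖ ≤ min c₂ 1 * |t - s| := by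
      simpa [hudef, Real.norm_eq_abs] using hyb
    have hu2 : ‖u‖ ≤ Ny * |t - s| := by
      have h0 : ‖u‖ ≤ ‖u - (t - s) • y s‖ + ‖(t - s) • y s‖ := by
        simpa using norm_add_le (u - (t - s) • y s) ((t - s) • y s)
      have h3 : ‖(t - s) • y s‖ = |t - s| * ‖y s‖ := by
        rw [norm_smul, Real.norm_eq_abs]
      have h4 : min c₂ 1 * |t - s| ≤ 1 * |t - s| :=
        mul_le_mul_of_nonneg_right (min_le_right _ _) (abs_nonneg _)
      have h5 : ‖u‖ ≤ min c₂ 1 * |t - s| + |t - s| * ‖y s‖ := by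
        rw [← h3]; linarith
      have h6 : Ny * |t - s| = 1 * |t - s| + |t - s| * ‖y s‖ := by
        rw [hNydef]; ring
      linarith
    have hubd : ‖u - (t - s) • y s‖ ≤ c₂ * |t - s| := by
      refine hu1.trans ?_
      exact mul_le_mul_of_nonneg_right (min_le_left _ _) (abs_nonneg _)
    -- FTC identity
    have hftc : F (x t, t) - F q = ∫ θ in (0:ℝ)..1, fderiv ℝ F (q + θ • w) w := by
      rw [← hwq]; exact ftc_aux hF q w
    have hint : IntervalIntegrable (fun θ : ℝ => fderiv ℝ F (q + θ • w) w)
        MeasureTheory.volume 0 1 := by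
      have hcw : Continuous fun θ : ℝ => q + θ • w :=
        continuous_const.add (continuous_id.smul continuous_const)
      exact ((hfd.comp hcw).clm_apply continuous_const).intervalIntegrable 0 1
    set L : Z := G q (y s) + A (0, 1) with hLdef
    have hsplit : F (x t, t) - F q - (t - s) • L
        = ∫ θ in (0:ℝ)..1, (fderiv ℝ F (q + θ • w) w - (t - s) • L) := by
      rw [intervalIntegral.integral_sub hint (intervalIntegrable_const),
        intervalIntegral.integral_const, hftc]
      simp
    -- pointwise bound
    have hbound : ∀ θ ∈ Set.uIoc (0:ℝ) 1,
        ‖fderiv ℝ F (q + θ • w) w - (t - s) • L‖ ≤ c * |t - s| := by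
      intro θ hθ
      rw [Set.uIoc_of_le zero_le_one] at hθ
      set p : X × ℝ := q + θ • w with hpdef
      have hpd : dist p q < δ := by
        rw [dist_eq_norm]
        have : p - q = θ • w := by simp [hpdef]
        rw [this, norm_smul, Real.norm_eq_abs, abs_of_nonneg hθ.1.le]
        calc θ * ‖w‖ ≤ 1 * ‖w‖ := by
              apply mul_le_mul_of_nonneg_right hθ.2 (norm_nonneg _)
          _ < δ := by rw [one_mul]; exact hwlt
      have hpU : p ∈ U := hUball (by
        exact Metric.mem_ball.2 (hpd.trans_le ((min_le_right _ _).trans (min_le_right _ _))))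
      have hG1 : ‖G p - G q‖ ≤ c₁ := by
        have := hGball (show dist p q < δ₁ from hpd.trans_le (min_le_left _ _))
        rw [dist_eq_norm] at this; exact this.le
      have hfd1 : ‖fderiv ℝ F p - A‖ ≤ c / 3 := by
        have := hfdball (show dist p q < δ₂ from
          hpd.trans_le ((min_le_right _ _).trans (min_le_left _ _)))
        rw [dist_eq_norm] at this; exact this.le
      have hw1 : fderiv ℝ F p w = G p u + (t - s) • fderiv ℝ F p (0, 1) := by
        have h1 : w = ((x t - x s, 0) : X × ℝ) + (t - s) • ((0:X), (1:ℝ)) := by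
          simp [hwdef, Prod.mk_add_mk, Prod.smul_mk]
        rw [h1, map_add, map_smul, ← hGext p hpU (x t - x s), map_sub, hudef]
      have hdecomp : fderiv ℝ F p w - (t - s) • L
          = (G p - G q) u + G q (u - (t - s) • y s)
            + (t - s) • ((fderiv ℝ F p - A) (0, 1)) := by
        rw [hw1, hLdef]
        simp only [ContinuousLinearMap.sub_apply, map_sub, map_smul, smul_add, smul_sub]
        abel
      rw [hdecomp]
      have b1 : ‖(G p - G q) u‖ ≤ c₁ * (Ny * |t - s|) := by
        calc ‖(G p - G q) u‖ ≤ ‖G p - G q‖ * ‖u‖ := (G p - G q).le_opNorm u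
          _ ≤ c₁ * (Ny * |t - s|) := by
              apply mul_le_mul hG1 hu2 (norm_nonneg _) hc₁.le
      have b2 : ‖G q (u - (t - s) • y s)‖ ≤ NG * (c₂ * |t - s|) := by
        calc ‖G q (u - (t - s) • y s)‖ ≤ ‖G q‖ * ‖u - (t - s) • y s‖ :=
              (G q).le_opNorm _
          _ ≤ NG * (c₂ * |t - s|) := by
              apply mul_le_mul (by rw [hNGdef]; linarith) hubd (norm_nonneg _) hNG.le
      have b3 : ‖(t - s) • ((fderiv ℝ F p - A) (0, 1))‖ ≤ |t - s| * (c / 3) := by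
        rw [norm_smul, Real.norm_eq_abs]
        apply mul_le_mul_of_nonneg_left _ (abs_nonneg _)
        calc ‖(fderiv ℝ F p - A) ((0:X), (1:ℝ))‖
            ≤ ‖fderiv ℝ F p - A‖ * ‖((0:X), (1:ℝ))‖ := (fderiv ℝ F p - A).le_opNorm _
          _ ≤ c / 3 := by
              have : ‖((0:X), (1:ℝ))‖ = 1 := by simp [Prod.norm_def]
              rw [this, mul_one]; exact hfd1
      calc ‖(G p - G q) u + G q (u - (t - s) • y s)
            + (t - s) • ((fderiv ℝ F p - A) (0, 1))‖
          ≤ ‖(G p - G q) u + G q (u - (t - s) • y s)‖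
            + ‖(t - s) • ((fderiv ℝ F p - A) (0, 1))‖ := norm_add_le _ _
        _ ≤ (‖(G p - G q) u‖ + ‖G q (u - (t - s) • y s)‖)
            + ‖(t - s) • ((fderiv ℝ F p - A) (0, 1))‖ := by
              gcongr; exact norm_add_le _ _
        _ ≤ (c₁ * (Ny * |t - s|) + NG * (c₂ * |t - s|)) + |t - s| * (c / 3) := by
              gcongr
        _ = c * |t - s| := by
              have : c₁ * (Ny * |t - s|) = (c / 3) * |t - s| := by
                rw [← mul_assoc, e1]
              rw [this]
              have : NG * (c₂ * |t - s|) = (c / 3) * |t - s| := by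
                rw [← mul_assoc, e2]
              rw [this]; ring
    -- conclude
    have := intervalIntegral.norm_integral_le_of_norm_le_const hbound
    calc ‖F (x t, t) - F q - (t - s) • L‖
        = ‖∫ θ in (0:ℝ)..1, (fderiv ℝ F (q + θ • w) w - (t - s) • L)‖ := by rw [hsplit]
      _ ≤ c * |t - s| * |1 - 0| := this
      _ = c * ‖t - s‖ := by simp [Real.norm_eq_abs]
  · have hxs : ContinuousOn (fun s => ((x s, s) : X × ℝ)) (Set.Ico 0 ε) :=
      hx.prodMk continuousOn_id
    have hmaps : Set.MapsTo (fun s => ((x s, s) : X × ℝ)) (Set.Ico 0 ε) U :=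
      fun s hs => hxU s hs
    exact ((hG.comp hxs hmaps).clm_apply hycont).add
      ((hfd.comp_continuousOn hxs).clm_apply continuousOn_const)
end

section
/- Let X, Y, Z be real Banach spaces with continuous injective embeddings j₁ : X → Y and j₂ : Y → Z, let U be an open neighborhood of (0,0) in X × ℝ, let F : X × ℝ → Z be continuously Fréchet differentiable with F(0,0) = 0, and let G : U → L(Y,Z) be continuous with G(x,s) ∘ j₁ = ∂ₓF(x,s) for all (x,s) ∈ U, such that each G(x,s) is a bijection with bounded inverse G(x,s)⁻¹ ∈ L(Z,Y). Suppose x : [0,ε) → X is continuous with (x(s),s) ∈ U for all s, and s ↦ j₁(x(s)) is continuously differentiable into Y with derivative y(s). Then the following are equivalent: (i) x(0) = 0 and F(x(s),s) = 0 for all s ∈ [0,ε); (ii) x(0) = 0 and y(s) + G(x(s),s)⁻¹[∂ₛF(x(s),s)] = 0 in Y for all s ∈ [0,ε). -/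
/-- Abstract implicit-function characterization: along a `C¹`-curve (into `Y`),
`F(x(s),s) = 0` for all `s` with `x(0) = 0` iff `x` solves the evolution equation
`x'(s) + ∂ₓF(x(s),s)⁻¹ ∂ₛF(x(s),s) = 0`, `x(0) = 0`. -/
theorem statement1
    {X Y Z : Type*}
    [NormedAddCommGroup X] [NormedSpace ℝ X] [CompleteSpace X]
    [NormedAddCommGroup Y] [NormedSpace ℝ Y] [CompleteSpace Y]
    [NormedAddCommGroup Z] [NormedSpace ℝ Z] [CompleteSpace Z]
    (j₁ : X →L[ℝ] Y) (j₂ : Y →L[ℝ] Z)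
    (hj₁ : Function.Injective j₁) (hj₂ : Function.Injective j₂)
    (U : Set (X × ℝ)) (hU : IsOpen U) (hU0 : ((0 : X), (0 : ℝ)) ∈ U)
    (F : X × ℝ → Z) (hF : ContDiff ℝ 1 F) (hF00 : F (0, 0) = 0)
    (G : X × ℝ → (Y →L[ℝ] Z)) (hG : ContinuousOn G U)
    (hGext : ∀ p ∈ U, ∀ v : X, G p (j₁ v) = fderiv ℝ F p (v, 0))
    (Ginv : X × ℝ → (Z →L[ℝ] Y))
    (hGinv₁ : ∀ p ∈ U, ∀ z : Z, G p (Ginv p z) = z)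
    (hGinv₂ : ∀ p ∈ U, ∀ w : Y, Ginv p (G p w) = w)
    (ε : ℝ) (hε : 0 < ε)
    (x : ℝ → X) (hx : ContinuousOn x (Set.Ico 0 ε))
    (hxU : ∀ s ∈ Set.Ico (0 : ℝ) ε, (x s, s) ∈ U)
    (y : ℝ → Y)
    (hy : ∀ s ∈ Set.Ico (0 : ℝ) ε,
      HasDerivWithinAt (fun t => j₁ (x t)) (y s) (Set.Ico 0 ε) s)
    (hycont : ContinuousOn y (Set.Ico 0 ε)) :
    (x 0 = 0 ∧ ∀ s ∈ Set.Ico (0 : ℝ) ε, F (x s, s) = 0) ↔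
    (x 0 = 0 ∧ ∀ s ∈ Set.Ico (0 : ℝ) ε,
      y s + Ginv (x s, s) (fderiv ℝ F (x s, s) (0, 1)) = 0) := by
  have hFd : Differentiable ℝ F := hF.differentiable one_ne_zero
  have hfc : Continuous fun q : X × ℝ => fderiv ℝ F q := hF.continuous_fderiv one_ne_zero
  -- Key lemma: the derivative of `t ↦ F (x t, t)` along the curve.
  have key : ∀ s ∈ Set.Ico (0 : ℝ) ε, HasDerivWithinAt (fun t => F (x t, t))
      (G (x s, s) (y s) + fderiv ℝ F (x s, s) (0, 1)) (Set.Ico 0 ε) s := by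
    intro s hs
    set p : X × ℝ := (x s, s) with hp
    set v : Z := fderiv ℝ F p (0, 1) with hv
    set Φ : X × ℝ → Z := fun q => F q - G p (j₁ q.1) - q.2 • v with hΦdef
    set L : (X × ℝ) →L[ℝ] Z :=
      ((G p).comp (j₁.comp (ContinuousLinearMap.fst ℝ X ℝ))
        + (ContinuousLinearMap.snd ℝ X ℝ).smulRight v) with hL
    have hLapp : ∀ q : X × ℝ, L q = G p (j₁ q.1) + q.2 • v := by
      intro q; simp [hL]
    have hA : ∀ q ∈ U, HasFDerivAt Φ (fderiv ℝ F q - L) q := by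
      intro q hq
      have h1 : HasFDerivAt F (fderiv ℝ F q) q := (hFd q).hasFDerivAt
      have h2 : HasFDerivAt (fun q : X × ℝ => L q) L q := L.hasFDerivAt
      have h3 := h1.sub h2
      have hfun : Φ = fun q => F q - L q := by
        funext q; rw [hLapp q]; simp [hΦdef, sub_sub]
      rw [hfun]; exact h3
    -- the "remainder" has zero derivative along the curve
    have h2' : HasDerivWithinAt (fun t => Φ (x t, t)) 0 (Set.Ico 0 ε) s := by
      rw [hasDerivWithinAt_iff_isLittleO, Asymptotics.isLittleO_iff]
      intro c hc
      set K : ℝ := ‖y s‖ + 1 with hK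
      have hKpos : 0 < K + 1 := by positivity
      set c' : ℝ := c / (K + 1) with hc'
      have hc'pos : 0 < c' := div_pos hc hKpos
      -- continuity facts at p
      have hpU : p ∈ U := hxU s hs
      have hGc : ContinuousAt G p := hG.continuousAt (hU.mem_nhds hpU)
      have hvc : ContinuousAt (fun q : X × ℝ => fderiv ℝ F q (0, 1)) p :=
        (hfc.clm_apply continuous_const).continuousAt
      have hball : ∃ ρ > 0, Metric.ball p ρ ⊆ U ∧
          ∀ q ∈ Metric.ball p ρ, ‖G q - G p‖ ≤ c' ∧ ‖fderiv ℝ F q (0, 1) - v‖ ≤ c' := by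
        have e1 : ∀ᶠ q in nhds p, ‖G q - G p‖ ≤ c' := by
          have := hGc (Metric.ball_mem_nhds (G p) hc'pos)
          filter_upwards [this] with q hq
          rw [Set.mem_preimage, Metric.mem_ball, dist_eq_norm] at hq; exact hq.le
        have e2 : ∀ᶠ q in nhds p, ‖fderiv ℝ F q (0, 1) - v‖ ≤ c' := by
          have := hvc (Metric.ball_mem_nhds v hc'pos)
          filter_upwards [this] with q hq
          rw [Set.mem_preimage, Metric.mem_ball, dist_eq_norm] at hq; exact hq.le
        have e3 : U ∈ nhds p := hU.mem_nhds hpU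
        obtain ⟨ρ, hρ, hsub⟩ := Metric.mem_nhds_iff.mp ((e1.and e2).and e3)
        exact ⟨ρ, hρ, fun q hq => (hsub hq).2, fun q hq => (hsub hq).1⟩
      obtain ⟨ρ, hρpos, hρU, hρest⟩ := hball
      -- eventually facts along the curve
      have hxt : ContinuousWithinAt (fun t => ((x t, t) : X × ℝ)) (Set.Ico 0 ε) s :=
        (hx s hs).prodMk continuousWithinAt_id
      have e1 : ∀ᶠ t in nhdsWithin s (Set.Ico 0 ε), ((x t, t) : X × ℝ) ∈ Metric.ball p ρ := by
        exact hxt (Metric.ball_mem_nhds p hρpos)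
      have e2 : ∀ᶠ t in nhdsWithin s (Set.Ico 0 ε),
          ‖j₁ (x t) - j₁ (x s) - (t - s) • y s‖ ≤ 1 * ‖t - s‖ := by
        have := hy s hs
        rw [hasDerivWithinAt_iff_isLittleO] at this
        exact (Asymptotics.isLittleO_iff.mp this) one_pos
      filter_upwards [e1, e2] with t hball_t hlin_t
      simp only [smul_zero, sub_zero]
      -- bound on ‖j₁ (x t) - j₁ (x s)‖
      have hj : ‖j₁ (x t) - j₁ (x s)‖ ≤ K * ‖t - s‖ := by
        have h1 : ‖j₁ (x t) - j₁ (x s)‖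
            ≤ ‖j₁ (x t) - j₁ (x s) - (t - s) • y s‖ + ‖(t - s) • y s‖ := by
          have := norm_add_le (j₁ (x t) - j₁ (x s) - (t - s) • y s) ((t - s) • y s)
          simpa using this
        have h2 : ‖(t - s) • y s‖ = ‖t - s‖ * ‖y s‖ := by
          rw [norm_smul]
        calc ‖j₁ (x t) - j₁ (x s)‖
            ≤ 1 * ‖t - s‖ + ‖t - s‖ * ‖y s‖ := by linarith
          _ = K * ‖t - s‖ := by rw [hK]; ring
      -- mean value estimate along the segment
      set w : X × ℝ := (x t, t) - p with hw
      set γ : ℝ → X × ℝ := fun θ => p + θ • w with hγ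
      have hseg : ∀ θ ∈ Set.Icc (0 : ℝ) 1, γ θ ∈ Metric.ball p ρ := by
        intro θ hθ
        rw [Metric.mem_ball, dist_eq_norm]
        have : γ θ - p = θ • w := by simp [hγ]
        rw [this, norm_smul]
        have hwρ : ‖w‖ < ρ := by
          have := hball_t
          rw [Metric.mem_ball, dist_eq_norm] at this
          simpa [hw] using this
        have hθ1 : ‖θ‖ ≤ 1 := by
          rw [Real.norm_eq_abs, abs_le]; exact ⟨by linarith [hθ.1], hθ.2⟩
        calc ‖θ‖ * ‖w‖ ≤ 1 * ‖w‖ := by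
              exact mul_le_mul_of_nonneg_right hθ1 (norm_nonneg _)
          _ = ‖w‖ := one_mul _
          _ < ρ := hwρ
      set C : ℝ := c' * (‖j₁ (x t) - j₁ (x s)‖ + ‖t - s‖) with hC
      have hder : ∀ θ ∈ Set.Icc (0 : ℝ) 1,
          HasDerivWithinAt (fun θ => Φ (γ θ)) ((fderiv ℝ F (γ θ) - L) w) (Set.Icc 0 1) θ := by
        intro θ hθ
        have hγd : HasDerivAt γ w θ := by
          have := ((hasDerivAt_id θ).smul_const w).const_add p
          simpa [hγ] using this
        have hq : γ θ ∈ U := hρU (hseg θ hθ)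
        exact ((hA (γ θ) hq).comp_hasDerivAt θ hγd).hasDerivWithinAt
      have hbound : ∀ θ ∈ Set.Icc (0 : ℝ) 1, ‖(fderiv ℝ F (γ θ) - L) w‖ ≤ C := by
        intro θ hθ
        set q : X × ℝ := γ θ with hq
        have hqball : q ∈ Metric.ball p ρ := hseg θ hθ
        have hqU : q ∈ U := hρU hqball
        have hw1 : w = ((x t - x s, (0 : ℝ)) : X × ℝ) + (t - s) • (((0 : X), (1 : ℝ))) := by
          simp [hw, hp, Prod.ext_iff]
        have hFw : fderiv ℝ F q w
            = fderiv ℝ F q (x t - x s, 0) + (t - s) • fderiv ℝ F q (0, 1) := by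
          rw [hw1, map_add, map_smul]
        have hGq : fderiv ℝ F q (x t - x s, 0) = G q (j₁ (x t) - j₁ (x s)) := by
          rw [← map_sub j₁, hGext q hqU (x t - x s)]
        have hexpr : (fderiv ℝ F q - L) w
            = (G q (j₁ (x t) - j₁ (x s)) - G p (j₁ (x t) - j₁ (x s)))
              + (t - s) • (fderiv ℝ F q (0, 1) - v) := by
          have hLw : L w = G p (j₁ (x t) - j₁ (x s)) + (t - s) • v := by
            rw [hLapp w]
            have h1 : w.1 = x t - x s := by simp [hw, hp]
            have h2 : w.2 = t - s := by simp [hw, hp]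
            rw [h1, h2, map_sub j₁]
          rw [ContinuousLinearMap.sub_apply, hFw, hGq, hLw, smul_sub]
          abel
        rw [hexpr]
        have hest := hρest q hqball
        have hn1 : ‖G q (j₁ (x t) - j₁ (x s)) - G p (j₁ (x t) - j₁ (x s))‖
            ≤ c' * ‖j₁ (x t) - j₁ (x s)‖ := by
          have : G q (j₁ (x t) - j₁ (x s)) - G p (j₁ (x t) - j₁ (x s))
              = (G q - G p) (j₁ (x t) - j₁ (x s)) := by simp
          rw [this]
          calc ‖(G q - G p) (j₁ (x t) - j₁ (x s))‖
              ≤ ‖G q - G p‖ * ‖j₁ (x t) - j₁ (x s)‖ := (G q - G p).le_opNorm _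
            _ ≤ c' * ‖j₁ (x t) - j₁ (x s)‖ :=
                mul_le_mul_of_nonneg_right hest.1 (norm_nonneg _)
        have hn2 : ‖(t - s) • (fderiv ℝ F q (0, 1) - v)‖ ≤ ‖t - s‖ * c' := by
          rw [norm_smul]
          exact mul_le_mul_of_nonneg_left hest.2 (norm_nonneg _)
        calc ‖(G q (j₁ (x t) - j₁ (x s)) - G p (j₁ (x t) - j₁ (x s)))
              + (t - s) • (fderiv ℝ F q (0, 1) - v)‖
            ≤ ‖G q (j₁ (x t) - j₁ (x s)) - G p (j₁ (x t) - j₁ (x s))‖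
              + ‖(t - s) • (fderiv ℝ F q (0, 1) - v)‖ := norm_add_le _ _
          _ ≤ c' * ‖j₁ (x t) - j₁ (x s)‖ + ‖t - s‖ * c' := add_le_add hn1 hn2
          _ = C := by rw [hC]; ring
      have hmvt := Convex.norm_image_sub_le_of_norm_hasDerivWithin_le hder hbound
        (convex_Icc 0 1) (Set.left_mem_Icc.mpr zero_le_one) (Set.right_mem_Icc.mpr zero_le_one)
      have hγ1 : γ 1 = (x t, t) := by simp [hγ, hw]
      have hγ0 : γ 0 = p := by simp [hγ]
      rw [hγ1, hγ0] at hmvt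
      have hmvt' : ‖Φ (x t, t) - Φ p‖ ≤ C := by
        calc ‖Φ (x t, t) - Φ p‖ ≤ C * ‖(1 : ℝ) - 0‖ := hmvt
          _ = C := by norm_num
      calc ‖Φ (x t, t) - Φ (x s, s)‖ = ‖Φ (x t, t) - Φ p‖ := by rw [hp]
        _ ≤ C := hmvt'
        _ ≤ c' * (K * ‖t - s‖ + ‖t - s‖) := by
            rw [hC]
            exact mul_le_mul_of_nonneg_left (by linarith) hc'pos.le
        _ = c' * (K + 1) * ‖t - s‖ := by ring
        _ = c * ‖t - s‖ := by
            rw [hc', div_mul_cancel₀]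
            exact ne_of_gt hKpos
    -- the "linear" part
    have h1 : HasDerivWithinAt (fun t => G p (j₁ (x t)) + t • v)
        (G p (y s) + v) (Set.Ico 0 ε) s := by
      refine HasDerivWithinAt.add ?_ ?_
      · exact (G p).hasFDerivAt.comp_hasDerivWithinAt s (hy s hs)
      · simpa using (hasDerivWithinAt_id s (Set.Ico 0 ε)).smul_const v
    have hfun : (fun t => F (x t, t))
        = fun t => Φ (x t, t) + (G p (j₁ (x t)) + t • v) := by
      funext t; simp [hΦdef]
    rw [hfun]
    have h3 : HasDerivWithinAt (fun t => Φ (x t, t) + (G p (j₁ (x t)) + t • v))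
        (0 + (G p (y s) + v)) (Set.Ico 0 ε) s := h2'.add h1
    rwa [zero_add] at h3
  constructor
  · rintro ⟨hx0, hFz⟩
    refine ⟨hx0, fun s hs => ?_⟩
    have hconst : HasDerivWithinAt (fun t => F (x t, t)) 0 (Set.Ico 0 ε) s :=
      (hasDerivWithinAt_const s (Set.Ico 0 ε) (0 : Z)).congr
        (fun t ht => hFz t ht) (hFz s hs)
    have h0 : G (x s, s) (y s) + fderiv ℝ F (x s, s) (0, 1) = 0 :=
      UniqueDiffWithinAt.eq_deriv (Set.Ico 0 ε) (uniqueDiffOn_Ico 0 ε s hs)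
        (key s hs) hconst
    calc y s + Ginv (x s, s) (fderiv ℝ F (x s, s) (0, 1))
        = Ginv (x s, s) (G (x s, s) (y s)) + Ginv (x s, s) (fderiv ℝ F (x s, s) (0, 1)) := by
          rw [hGinv₂ _ (hxU s hs)]
      _ = Ginv (x s, s) (G (x s, s) (y s) + fderiv ℝ F (x s, s) (0, 1)) := (map_add _ _ _).symm
      _ = Ginv (x s, s) 0 := by rw [h0]
      _ = 0 := map_zero _
  · rintro ⟨hx0, hode⟩
    refine ⟨hx0, fun s hs => ?_⟩
    have hGy : ∀ t ∈ Set.Ico (0 : ℝ) ε,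
        G (x t, t) (y t) + fderiv ℝ F (x t, t) (0, 1) = 0 := by
      intro t ht
      have h := hode t ht
      have hyt : y t = -Ginv (x t, t) (fderiv ℝ F (x t, t) (0, 1)) :=
        eq_neg_of_add_eq_zero_left h
      rw [hyt, map_neg, hGinv₁ _ (hxU t ht)]
      exact neg_add_cancel _
    have hzero : ∀ t ∈ Set.Ico (0 : ℝ) ε,
        HasDerivWithinAt (fun t => F (x t, t)) 0 (Set.Ico 0 ε) t := by
      intro t ht
      have := key t ht
      rwa [hGy t ht] at this
    have h0mem : (0 : ℝ) ∈ Set.Ico (0 : ℝ) ε := ⟨le_refl 0, hε⟩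
    have hmvt := Convex.norm_image_sub_le_of_norm_hasDerivWithin_le
      (C := (0 : ℝ)) (f' := fun _ => (0 : Z)) hzero (fun t _ => by simp) (convex_Ico 0 ε) h0mem hs
    have : F (x s, s) = F (x 0, 0) := by
      have h := hmvt
      rw [zero_mul] at h
      have := norm_le_zero_iff.mp h
      exact sub_eq_zero.mp this
    rw [this, hx0, hF00]
end

section
/- Let n ≥ 3, 0 < r < 1, and define u : EuclideanSpace ℝ (Fin n) \ {0} → ℝ by u(x) = (‖x‖^(2−n) − 1)/(r^(2−n) − 1). Then u is harmonic on the open annulus {x : r < ‖x‖ < 1}, u(x) = 0 whenever ‖x‖ = 1, u(x) = 1 whenever ‖x‖ = r, and for every x with ‖x‖ = r the directional derivative of u at x in the direction ν = −x/‖x‖ (the unit outer normal to the annulus at its inner boundary) equals (n−2)/(r(1 − r^(n−2))). -/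
open RealInnerProductSpace Real


/-- `f` is harmonic on the open set `U`: it is `C²` on `U` and the sum of its
second partial derivatives in the standard coordinate directions vanishes on `U`. -/
def IsHarmonicOn {n : ℕ} (f : EuclideanSpace ℝ (Fin n) → ℝ)
    (U : Set (EuclideanSpace ℝ (Fin n))) : Prop :=
  ContDiffOn ℝ 2 f U ∧
  ∀ x ∈ U, ∑ i : Fin n,
    fderiv ℝ (fun y => fderiv ℝ f y (EuclideanSpace.single i 1)) x
      (EuclideanSpace.single i 1) = 0

lemma hasFDerivF (β c : ℝ) (x : EuclideanSpace ℝ (Fin n)) (hx : x ≠ 0) :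
    HasFDerivAt (fun y : EuclideanSpace ℝ (Fin n) => (((‖y‖:ℝ)^2) ^ β - 1)/c)
      ((2*β*((‖x‖:ℝ)^2)^(β-1)/c) • innerSL ℝ x) x := by
  have hs : (0:ℝ) < ‖x‖^2 := pow_pos (norm_pos_iff.mpr hx) 2
  have hq : HasFDerivAt (fun y : EuclideanSpace ℝ (Fin n) => (‖y‖:ℝ)^2)
      (2 • (innerSL ℝ x)) x := (hasStrictFDerivAt_norm_sq x).hasFDerivAt
  have hh : HasDerivAt (fun t : ℝ => (t ^ β - 1)/c) (β * (‖x‖^2) ^ (β-1) / c) (‖x‖^2) :=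
    ((Real.hasDerivAt_rpow_const (Or.inl hs.ne')).sub_const 1).div_const c
  have := hh.comp_hasFDerivAt x hq
  refine HasFDerivAt.congr_fderiv this ?_
  ext v
  simp only [ContinuousLinearMap.smul_apply, ContinuousLinearMap.smul_apply,
    smul_eq_mul, nsmul_eq_mul]
  push_cast
  ring

lemma hasFDerivG (β c : ℝ) (e x : EuclideanSpace ℝ (Fin n)) (hx : x ≠ 0) :
    HasFDerivAt (fun y : EuclideanSpace ℝ (Fin n) =>
        (2*β*((‖y‖:ℝ)^2)^(β-1)/c) * ⟪y, e⟫)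
      ((4*β*(β-1)*((‖x‖:ℝ)^2)^(β-2)*⟪x, e⟫/c) • innerSL ℝ x
        + (2*β*((‖x‖:ℝ)^2)^(β-1)/c) • innerSL ℝ e) x := by
  have hs : (0:ℝ) < ‖x‖^2 := pow_pos (norm_pos_iff.mpr hx) 2
  have hq : HasFDerivAt (fun y : EuclideanSpace ℝ (Fin n) => (‖y‖:ℝ)^2)
      (2 • (innerSL ℝ x)) x := (hasStrictFDerivAt_norm_sq x).hasFDerivAt
  have hh : HasDerivAt (fun t : ℝ => 2*β*t^(β-1)/c) (2*β*((β-1) * (‖x‖^2)^(β-1-1))/c) (‖x‖^2) :=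
    (((Real.hasDerivAt_rpow_const (p := β - 1) (Or.inl hs.ne')).const_mul (2*β)).div_const c)
  have hκ := hh.comp_hasFDerivAt x hq
  have hinner : HasFDerivAt (fun y : EuclideanSpace ℝ (Fin n) => ⟪y, e⟫)
      (innerSL ℝ e) x := by
    have : (fun y : EuclideanSpace ℝ (Fin n) => ⟪y, e⟫) = fun y => innerSL ℝ e y := by
      ext y; exact (real_inner_comm y e).symm
    rw [this]
    exact (innerSL ℝ e).hasFDerivAt
  have := hκ.mul hinner
  refine HasFDerivAt.congr_fderiv this ?_
  ext v
  simp only [ContinuousLinearMap.add_apply, ContinuousLinearMap.smul_apply, smul_eq_mul,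
    nsmul_eq_mul, innerSL_apply_apply, Function.comp]
  have : (β - 2 : ℝ) = β - 1 - 1 := by ring
  rw [this]
  push_cast
  ring

/-- the capacitary potential `u(x) = (‖x‖^(2−n) − 1)/(r^(2−n) − 1)` of `𝔹_r`
in the unit ball (`n ≥ 3`): harmonic in the annulus, boundary values `0` and `1`, and inner
normal derivative `(n−2)/(r(1 − r^(n−2)))`. -/
theorem statement3 (n : ℕ) (hn : 3 ≤ n) (r : ℝ) (hr0 : 0 < r) (hr1 : r < 1)
    (u : EuclideanSpace ℝ (Fin n) → ℝ)
    (hu : ∀ x : EuclideanSpace ℝ (Fin n), x ≠ 0 →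
      u x = (‖x‖ ^ ((2 : ℝ) - n) - 1) / (r ^ ((2 : ℝ) - n) - 1)) :
    IsHarmonicOn u {x : EuclideanSpace ℝ (Fin n) | r < ‖x‖ ∧ ‖x‖ < 1} ∧
    (∀ x : EuclideanSpace ℝ (Fin n), ‖x‖ = 1 → u x = 0) ∧
    (∀ x : EuclideanSpace ℝ (Fin n), ‖x‖ = r → u x = 1) ∧
    (∀ x : EuclideanSpace ℝ (Fin n), ‖x‖ = r →
      fderiv ℝ u x (-(‖x‖⁻¹ • x)) = ((n : ℝ) - 2) / (r * (1 - r ^ (n - 2)))) := by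
  
  have hn3 : (3:ℝ) ≤ n := by exact_mod_cast hn
  have hn2 : (2:ℝ) - n < 0 := by linarith
  set c : ℝ := r ^ ((2:ℝ) - n) - 1 with hcdef
  have hc : 0 < c := by
    have : 1 < r ^ ((2:ℝ) - n) :=
      (Real.one_lt_rpow_iff_of_pos hr0).mpr (Or.inr ⟨hr1, hn2⟩)
    simp only [hcdef]; linarith
  set β : ℝ := ((2:ℝ) - n)/2 with hβ
  have h2β : 2 * β = (2:ℝ) - n := by rw [hβ]; ring
  have hud : ∀ x : EuclideanSpace ℝ (Fin n), x ≠ 0 →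
      u x = (((‖x‖:ℝ)^2) ^ β - 1)/c := by
    intro x hx
    rw [hu x hx]
    have : ((‖x‖:ℝ)^2) ^ β = ‖x‖ ^ ((2:ℝ) - n) := by
      rw [← Real.rpow_natCast ‖x‖ 2, ← Real.rpow_mul (norm_nonneg x), ← h2β]
      norm_num
    rw [this]
  have hev : ∀ x : EuclideanSpace ℝ (Fin n), x ≠ 0 →
      u =ᶠ[nhds x] (fun y => (((‖y‖:ℝ)^2) ^ β - 1)/c) := by
    intro x hx
    filter_upwards [compl_singleton_mem_nhds hx] with y hy
    exact hud y hy
  have hfd : ∀ x : EuclideanSpace ℝ (Fin n), x ≠ 0 →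
      fderiv ℝ u x = (2*β*((‖x‖:ℝ)^2)^(β-1)/c) • innerSL ℝ x := by
    intro x hx
    rw [(hev x hx).fderiv_eq]
    exact (hasFDerivF β c x hx).fderiv
  refine ⟨⟨?_, ?_⟩, ?_, ?_, ?_⟩
  · -- ContDiffOn
    intro x hx
    have hx0 : x ≠ 0 := by
      intro h
      have := hx.1
      rw [h, norm_zero] at this
      linarith
    have hs : (0:ℝ) < ‖x‖^2 := pow_pos (norm_pos_iff.mpr hx0) 2
    have h1 : ContDiffAt ℝ 2 (fun t : ℝ => (t ^ β - 1)/c) (‖x‖^2) :=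
      ((Real.contDiffAt_rpow_const_of_ne (p := β) hs.ne').sub contDiffAt_const).div_const c
    have h2 : ContDiffAt ℝ 2 (fun y : EuclideanSpace ℝ (Fin n) => (‖y‖:ℝ)^2) x :=
      (contDiff_norm_sq ℝ).contDiffAt
    exact ((h1.comp x h2).congr_of_eventuallyEq (hev x hx0)).contDiffWithinAt
  · -- Laplacian
    intro x hx
    have hx0 : x ≠ 0 := by
      intro h
      have := hx.1
      rw [h, norm_zero] at this
      linarith
    have hs : (0:ℝ) < ‖x‖^2 := pow_pos (norm_pos_iff.mpr hx0) 2
    have hterm : ∀ i : Fin n,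
        fderiv ℝ (fun y => fderiv ℝ u y (EuclideanSpace.single i 1)) x
          (EuclideanSpace.single i 1)
        = 4*β*(β-1)*((‖x‖:ℝ)^2)^(β-2)*(x i)^2/c + 2*β*((‖x‖:ℝ)^2)^(β-1)/c := by
      intro i
      set e : EuclideanSpace ℝ (Fin n) := EuclideanSpace.single i 1 with he
      have hloc : (fun y => fderiv ℝ u y e) =ᶠ[nhds x]
          (fun y => (2*β*((‖y‖:ℝ)^2)^(β-1)/c) * ⟪y, e⟫) := by
        filter_upwards [compl_singleton_mem_nhds hx0] with y hy
        rw [hfd y hy]; rfl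
      rw [hloc.fderiv_eq, (hasFDerivG β c e x hx0).fderiv]
      have hxe : ⟪x, e⟫ = x i := by
        simp [he, EuclideanSpace.inner_single_right]
      have hee : ⟪e, e⟫ = (1:ℝ) := by
        simp [he, EuclideanSpace.inner_single_right, EuclideanSpace.single_apply]
      simp only [ContinuousLinearMap.add_apply, ContinuousLinearMap.smul_apply,
        innerSL_apply_apply, smul_eq_mul, hxe, hee]
      ring
    rw [Finset.sum_congr rfl (fun i _ => hterm i)]
    rw [Finset.sum_add_distrib, Finset.sum_const, Finset.card_univ, Fintype.card_fin]
    have hsum : ∑ i : Fin n, 4*β*(β-1)*((‖x‖:ℝ)^2)^(β-2)*(x i)^2/c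
        = 4*β*(β-1)*((‖x‖:ℝ)^2)^(β-2)*(‖x‖^2)/c := by
      rw [← Finset.sum_div, ← Finset.mul_sum]
      congr 1
      congr 1
      rw [EuclideanSpace.norm_eq, Real.sq_sqrt (by positivity)]
      congr 1; ext i; rw [Real.norm_eq_abs, sq_abs]
    rw [hsum]
    have hrw : ((‖x‖:ℝ)^2)^(β-2) * ‖x‖^2 = ((‖x‖:ℝ)^2)^(β-1) := by
      have h12 : (β - 1 : ℝ) = (β-2) + 1 := by ring
      rw [h12, Real.rpow_add hs, Real.rpow_one]
    have hβ0 : 4*β*(β-1) + 2*(n:ℝ)*β = 0 := by rw [hβ]; ring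
    have : 4*β*(β-1)*(((‖x‖:ℝ)^2)^(β-2) * ‖x‖^2)/c + (n:ℝ) * (2*β*((‖x‖:ℝ)^2)^(β-1)/c)
        = (4*β*(β-1) + 2*(n:ℝ)*β) * ((‖x‖:ℝ)^2)^(β-1)/c := by
      rw [hrw]; ring
    rw [nsmul_eq_mul]
    calc 4*β*(β-1)*((‖x‖:ℝ)^2)^(β-2)*(‖x‖^2)/c + (n:ℝ) * (2*β*((‖x‖:ℝ)^2)^(β-1)/c)
        = (4*β*(β-1) + 2*(n:ℝ)*β) * ((‖x‖:ℝ)^2)^(β-1)/c := by rw [← this]; ring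
      _ = 0 := by rw [hβ0]; simp
  · -- boundary value 0
    intro x hx1
    have hx0 : x ≠ 0 := by
      intro h; rw [h, norm_zero] at hx1; linarith
    rw [hu x hx0, hx1, Real.one_rpow, sub_self, zero_div]
  · -- boundary value 1
    intro x hxr
    have hx0 : x ≠ 0 := by
      intro h; rw [h, norm_zero] at hxr; linarith
    rw [hu x hx0, hxr]
    exact div_self hc.ne'
  · -- normal derivative
    intro x hxr
    have hx0 : x ≠ 0 := by
      intro h; rw [h, norm_zero] at hxr; linarith
    rw [hfd x hx0]
    have hinner : ⟪x, -(‖x‖⁻¹ • x)⟫ = -r := by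
      rw [inner_neg_right, real_inner_smul_right, real_inner_self_eq_norm_sq, hxr]
      field_simp
    simp only [ContinuousLinearMap.smul_apply, innerSL_apply_apply, smul_eq_mul]
    rw [hinner, hxr]
    -- now algebra
    have hkey : ((r:ℝ)^2)^(β-1) = r ^ (-(n:ℝ)) := by
      rw [← Real.rpow_natCast r 2, ← Real.rpow_mul hr0.le]
      congr 1
      rw [hβ]; push_cast; ring
    rw [hkey]
    have hnatpow : (r:ℝ) ^ (n-2) = r ^ ((n:ℝ) - 2) := by
      rw [← Real.rpow_natCast r (n-2), Nat.cast_sub (by omega : 2 ≤ n)]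
      norm_num
    rw [hnatpow]
    have hden : r * (1 - r ^ ((n:ℝ)-2)) ≠ 0 := by
      have h1 : r ^ ((n:ℝ)-2) < 1 := Real.rpow_lt_one hr0.le hr1 (by linarith)
      have : 0 < r * (1 - r ^ ((n:ℝ)-2)) := by
        apply mul_pos hr0; linarith
      exact this.ne'
    rw [div_mul_eq_mul_div, div_eq_div_iff hc.ne' hden]
    have hA : r ^ (-(n:ℝ)) * r = r ^ ((1:ℝ) - n) := by
      nth_rewrite 2 [← Real.rpow_one r]
      rw [← Real.rpow_add hr0]; congr 1; ring
    have hB : r ^ ((1:ℝ)-n) * r = r ^ ((2:ℝ) - n) := by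
      nth_rewrite 2 [← Real.rpow_one r]
      rw [← Real.rpow_add hr0]; congr 1; ring
    have hC : r ^ ((2:ℝ)-n) * r ^ ((n:ℝ)-2) = 1 := by
      rw [← Real.rpow_add hr0]; norm_num
    have hβn : 2*β = (2:ℝ) - n := h2β
    calc 2*β*r ^ (-(n:ℝ)) * -r * (r * (1 - r ^ ((n:ℝ)-2)))
        = -(2*β) * ((r ^ (-(n:ℝ)) * r * r) * (1 - r ^ ((n:ℝ)-2))) := by ring
      _ = ((n:ℝ) - 2) * ((r ^ ((2:ℝ)-n)) * (1 - r ^ ((n:ℝ)-2))) := by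
          rw [hA, hB, hβn]; ring
      _ = ((n:ℝ) - 2) * (r ^ ((2:ℝ)-n) - 1) := by
          rw [mul_sub, mul_one, hC]
      _ = ((n:ℝ) - 2) * c := by rw [hcdef]
end

section
/- Let n ≥ 3 be a natural number. The function Q : (0,1) → ℝ defined by Q(r) = (n−2)/(r(1 − r^(n−2))) is positive and convex on (0,1), and attains its minimum on (0,1) exactly at the point r⋆ = (n−1)^(−1/(n−2)), where Q(r⋆) = (n−1)^((n−1)/(n−2)); that is, Q(r) ≥ (n−1)^((n−1)/(n−2)) for all r ∈ (0,1) with equality if and only if r = (n−1)^(−1/(n−2)). -/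
/-- harmonic-arithmetic style inequality -/
lemma my_hm_am (u v a b c : ℝ) (hu : 0 < u) (hv : 0 < v) (ha : 0 ≤ a) (hb : 0 ≤ b)
    (hab : a + b = 1) (hc : 0 ≤ c) : c / (a * u + b * v) ≤ a * (c / u) + b * (c / v) := by
  have hS : 0 < a * u + b * v := by
    rcases ha.lt_or_eq with h | h
    · nlinarith [mul_nonneg hb hv.le]
    · have hb1 : b = 1 := by linarith
      rw [← h, hb1]; simpa using hv
  obtain rfl : b = 1 - a := by linarith
  rw [div_le_iff₀ hS,
    show a * (c / u) + (1 - a) * (c / v) = (a * c * v + (1 - a) * c * u) / (u * v) by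
      field_simp,
    div_mul_eq_mul_div, le_div_iff₀ (by positivity)]
  nlinarith [mul_nonneg (mul_nonneg (mul_nonneg ha hb) hc) (sq_nonneg (u - v))]

lemma my_concave_div {s : Set ℝ} {f : ℝ → ℝ} {c : ℝ} (hc : 0 ≤ c) (hf : ConcaveOn ℝ s f)
    (hpos : ∀ x ∈ s, 0 < f x) : ConvexOn ℝ s (fun x => c / f x) := by
  refine ⟨hf.1, fun x hx y hy a b ha hb hab => ?_⟩
  have hz : a • x + b • y ∈ s := hf.1 hx hy ha hb hab
  have h1 : a * f x + b * f y ≤ f (a • x + b • y) := by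
    simpa [smul_eq_mul] using hf.2 hx hy ha hb hab
  have hfx := hpos x hx
  have hfy := hpos y hy
  have hS : 0 < a * f x + b * f y := by
    rcases ha.lt_or_eq with h | h
    · nlinarith [mul_nonneg hb hfy.le]
    · have hb1 : b = 1 := by linarith
      rw [← h, hb1]; simpa using hfy
  calc c / f (a • x + b • y) ≤ c / (a * f x + b * f y) := by gcongr
    _ ≤ a * (c / f x) + b * (c / f y) := my_hm_am _ _ _ _ _ hfx hfy ha hb hab hc
  
/-- strict max of r(1-r^m) at a, where a^m (m+1) = 1 -/
lemma my_key (m : ℕ) (hm : 1 ≤ m) (a r : ℝ) (ha0 : 0 < a) (hr0 : 0 < r) (hra : r ≠ a)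
    (hapowN : a ^ m * ((m : ℝ) + 1) = 1) : r * (1 - r ^ m) < a * (1 - a ^ m) := by
  set s : ℝ := r / a - 1 with hsdef
  have hs : -1 < s := by
    have : 0 < r / a := div_pos hr0 ha0
    simp only [hsdef]; linarith
  have hs' : s ≠ 0 := by
    simp only [hsdef, sub_ne_zero]
    exact fun h => hra (by field_simp at h; linarith)
  have hp : 1 < ((m + 1 : ℕ) : ℝ) := by
    have : (1 : ℝ) ≤ (m : ℝ) := by exact_mod_cast hm
    push_cast; linarith
  have hber := one_add_mul_self_lt_rpow_one_add hs.le hs' hp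
  rw [Real.rpow_natCast] at hber
  have h1s : 1 + s = r / a := by simp [hsdef]
  rw [h1s, div_pow, lt_div_iff₀ (pow_pos ha0 (m + 1))] at hber
  have has : a * s = r - a := by
    rw [hsdef, mul_sub, mul_one, mul_div_assoc', mul_div_cancel_left₀ r ha0.ne']
  have h3 : ((m : ℝ) + 1) * s * a ^ (m + 1) = r - a := by
    have : ((m : ℝ) + 1) * s * a ^ (m + 1) = (a ^ m * ((m : ℝ) + 1)) * (a * s) := by
      rw [pow_succ]; ring
    rw [this, hapowN, one_mul, has]
  have hB : a ^ (m + 1) + (r - a) < r ^ (m + 1) := by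
    push_cast at hber
    nlinarith [hber, h3]
  have hps : r ^ (m + 1) = r ^ m * r := pow_succ r m
  have hpa : a ^ (m + 1) = a ^ m * a := pow_succ a m
  nlinarith [hB]

/-- for `n ≥ 3`, `Q(r) = (n−2)/(r(1 − r^(n−2)))` is positive and convex on
`(0,1)` and attains its minimum over `(0,1)` exactly at `r⋆ = (n−1)^(−1/(n−2))`, with
minimum value `(n−1)^((n−1)/(n−2))`. -/
theorem statement5 (n : ℕ) (hn : 3 ≤ n) (Q : ℝ → ℝ)
    (hQ : ∀ r ∈ Set.Ioo (0 : ℝ) 1, Q r = ((n : ℝ) - 2) / (r * (1 - r ^ (n - 2)))) :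
    (∀ r ∈ Set.Ioo (0 : ℝ) 1, 0 < Q r) ∧
    ConvexOn ℝ (Set.Ioo (0 : ℝ) 1) Q ∧
    Q (((n : ℝ) - 1) ^ (-(1 : ℝ) / ((n : ℝ) - 2))) =
      ((n : ℝ) - 1) ^ (((n : ℝ) - 1) / ((n : ℝ) - 2)) ∧
    (∀ r ∈ Set.Ioo (0 : ℝ) 1, ((n : ℝ) - 1) ^ (((n : ℝ) - 1) / ((n : ℝ) - 2)) ≤ Q r) ∧
    (∀ r ∈ Set.Ioo (0 : ℝ) 1,
      Q r = ((n : ℝ) - 1) ^ (((n : ℝ) - 1) / ((n : ℝ) - 2)) ↔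
      r = ((n : ℝ) - 1) ^ (-(1 : ℝ) / ((n : ℝ) - 2))) := by
  have hn3 : (3 : ℝ) ≤ (n : ℝ) := by exact_mod_cast hn
  set m : ℕ := n - 2 with hmdef
  have hm1 : 1 ≤ m := by omega
  have hmc : (m : ℝ) = (n : ℝ) - 2 := by
    rw [hmdef, Nat.cast_sub (by omega : 2 ≤ n)]; norm_num
  have hm1R : (1 : ℝ) ≤ (m : ℝ) := by exact_mod_cast hm1
  set N : ℝ := (n : ℝ) - 1 with hNdef
  have hN : 1 < N := by rw [hNdef]; linarith
  have hN0 : (0 : ℝ) < N := by linarith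
  have hNm : (m : ℝ) + 1 = N := by rw [hmc, hNdef]; ring
  set e : ℝ := -(1 : ℝ) / ((n : ℝ) - 2) with hedef
  set a : ℝ := N ^ e with hadef
  have ha0 : 0 < a := Real.rpow_pos_of_pos hN0 _
  have hn2 : (0 : ℝ) < (n : ℝ) - 2 := by linarith
  have ha1 : a < 1 := by
    rw [hadef]
    exact Real.rpow_lt_one_of_one_lt_of_neg hN
      (by rw [hedef]; exact div_neg_of_neg_of_pos (by norm_num) hn2)
  have hamem : a ∈ Set.Ioo (0 : ℝ) 1 := ⟨ha0, ha1⟩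
  have hapow : a ^ m = 1 / N := by
    rw [hadef, ← Real.rpow_natCast (N ^ e) m, ← Real.rpow_mul hN0.le]
    rw [show e * (m : ℝ) = -1 by rw [hedef, ← hmc]; field_simp]
    rw [Real.rpow_neg_one, one_div]
  have hapowN : a ^ m * ((m : ℝ) + 1) = 1 := by
    rw [hapow, hNm]; field_simp
  -- positivity of the denominator
  have hgpos : ∀ r ∈ Set.Ioo (0 : ℝ) 1, 0 < r * (1 - r ^ m) := by
    intro r hr
    have : r ^ m < 1 := pow_lt_one₀ hr.1.le hr.2 (by omega)
    have := hr.1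
    nlinarith
  -- the key strict maximality
  have hkey : ∀ r ∈ Set.Ioo (0 : ℝ) 1, r ≠ a → r * (1 - r ^ m) < a * (1 - a ^ m) :=
    fun r hr hra => my_key m hm1 a r ha0 hr.1 hra hapowN
  -- the value of the minimum
  have hNa : N ^ (((n : ℝ) - 1) / ((n : ℝ) - 2)) = N / a := by
    rw [show ((n : ℝ) - 1) / ((n : ℝ) - 2) = (1 : ℝ) - e by rw [hedef]; field_simp; ring,
      Real.rpow_sub hN0, Real.rpow_one, hadef]
  have hval : ((n : ℝ) - 2) / (a * (1 - a ^ m)) = N ^ (((n : ℝ) - 1) / ((n : ℝ) - 2)) := by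
    rw [hNa, hapow]
    rw [show (1 : ℝ) - 1 / N = ((n : ℝ) - 2) / N by
      rw [eq_div_iff hN0.ne', sub_mul, one_div, inv_mul_cancel₀ hN0.ne', hNdef]; ring]
    field_simp
  refine ⟨?_, ?_, ?_, ?_, ?_⟩
  · intro r hr
    rw [hQ r hr]
    exact div_pos hn2 (hgpos r hr)
  · have hconc : ConcaveOn ℝ (Set.Ioo (0 : ℝ) 1) (fun r : ℝ => r - r ^ (m + 1)) := by
      have := (concaveOn_id (convex_Ioo (0 : ℝ) 1)).sub
        ((convexOn_pow (m + 1)).subset (fun x hx => le_of_lt hx.1) (convex_Ioo (0 : ℝ) 1))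
      simpa [Pi.sub_def] using this
    have heq : ∀ t : ℝ, t * (1 - t ^ m) = t - t ^ (m + 1) := fun t => by rw [pow_succ]; ring
    have hpos' : ∀ x ∈ Set.Ioo (0 : ℝ) 1, 0 < x - x ^ (m + 1) := fun x hx => by
      rw [← heq]; exact hgpos x hx
    have hdiv := my_concave_div (le_of_lt hn2) hconc hpos'
    refine ⟨convex_Ioo 0 1, fun x hx y hy aw bw haw hbw habw => ?_⟩
    have hz : aw • x + bw • y ∈ Set.Ioo (0 : ℝ) 1 := (convex_Ioo (0 : ℝ) 1) hx hy haw hbw habw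
    simp only [smul_eq_mul] at hz ⊢
    rw [hQ _ hz, hQ _ hx, hQ _ hy, heq, heq, heq]
    simpa [smul_eq_mul] using hdiv.2 hx hy haw hbw habw
  · rw [hQ a hamem]
    exact hval
  · intro r hr
    rw [hQ r hr, ← hval]
    rcases eq_or_ne r a with rfl | hra
    · exact le_refl _
    · exact le_of_lt (div_lt_div_of_pos_left hn2 (hgpos r hr) (hkey r hr hra))
  · intro r hr
    constructor
    · intro h
      by_contra hra
      have hlt : ((n : ℝ) - 2) / (a * (1 - a ^ m)) < ((n : ℝ) - 2) / (r * (1 - r ^ m)) :=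
        div_lt_div_of_pos_left hn2 (hgpos r hr) (hkey r hr hra)
      rw [hQ r hr, ← hval] at h
      linarith [h.le, hlt]
    · rintro rfl
      rw [hQ _ hr]
      exact hval
end

section
/- For Q(r) = −1/(r · log r) on (0,1) the following trichotomy holds for each real q > 0: if q > e there exist exactly two points r ∈ (0,1) with Q(r) = q, one satisfying 0 < r < e⁻¹ and the other satisfying e⁻¹ < r < 1; if q = e there exists exactly one such point, namely r = e⁻¹; and if 0 < q < e there exists no r ∈ (0,1) with Q(r) = q. -/
open Real Set Filter

private noncomputable def g6 (x : ℝ) : ℝ := -(x * Real.log x)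

private lemma g6_cont : Continuous g6 := Real.continuous_mul_log.neg

private lemma g6_deriv {x : ℝ} (hx : x ≠ 0) : deriv g6 x = -(Real.log x + 1) := by
  unfold g6
  rw [deriv.fun_neg, Real.deriv_mul_log hx]

private lemma g6_inv_e : g6 (Real.exp 1)⁻¹ = (Real.exp 1)⁻¹ := by
  simp [g6, Real.log_inv, Real.log_exp]

private lemma g6_mono : StrictMonoOn g6 (Icc 0 (Real.exp 1)⁻¹) := by
  apply strictMonoOn_of_deriv_pos (convex_Icc _ _) g6_cont.continuousOn
  intro x hx
  rw [interior_Icc] at hx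
  rw [g6_deriv (ne_of_gt hx.1)]
  have h : Real.log x < -1 := by
    have := Real.log_lt_log hx.1 hx.2
    rwa [Real.log_inv, Real.log_exp] at this
  linarith

private lemma g6_anti : StrictAntiOn g6 (Icc (Real.exp 1)⁻¹ 1) := by
  apply strictAntiOn_of_deriv_neg (convex_Icc _ _) g6_cont.continuousOn
  intro x hx
  rw [interior_Icc] at hx
  have hx0 : (0:ℝ) < x := lt_trans (by positivity) hx.1
  rw [g6_deriv (ne_of_gt hx0)]
  have h : -1 < Real.log x := by
    have := Real.log_lt_log (by positivity) hx.1
    rwa [Real.log_inv, Real.log_exp] at this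
  linarith

private lemma g6_le {r : ℝ} (hr : r ∈ Ioo (0:ℝ) 1) : g6 r ≤ (Real.exp 1)⁻¹ := by
  rcases le_or_gt r (Real.exp 1)⁻¹ with h | h
  · have := g6_mono.monotoneOn ⟨le_of_lt hr.1, h⟩
      ⟨inv_nonneg.mpr (Real.exp_pos 1).le, le_refl _⟩ h
    rwa [g6_inv_e] at this
  · have hE1 : (Real.exp 1)⁻¹ ≤ 1 := by
      rw [inv_le_one_iff₀]; right; have := Real.exp_one_gt_d9; linarith
    have := g6_anti.antitoneOn ⟨le_refl _, hE1⟩ ⟨h.le, hr.2.le⟩ h.le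
    rwa [g6_inv_e] at this

/-- trichotomy for the equation `−1/(r log r) = q` on `(0,1)`: exactly two
solutions (one on each side of `e⁻¹`) if `q > e`, exactly the solution `r = e⁻¹` if `q = e`,
and no solution if `0 < q < e`. -/
theorem statement6 (Q : ℝ → ℝ)
    (hQ : ∀ r ∈ Set.Ioo (0 : ℝ) 1, Q r = -1 / (r * Real.log r))
    (q : ℝ) (hq : 0 < q) :
    (Real.exp 1 < q →
      ∃ r₁ r₂ : ℝ, r₁ ∈ Set.Ioo (0 : ℝ) (Real.exp 1)⁻¹ ∧
        r₂ ∈ Set.Ioo (Real.exp 1)⁻¹ 1 ∧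
        {r ∈ Set.Ioo (0 : ℝ) 1 | Q r = q} = {r₁, r₂}) ∧
    (q = Real.exp 1 →
      {r ∈ Set.Ioo (0 : ℝ) 1 | Q r = q} = {(Real.exp 1)⁻¹}) ∧
    (q < Real.exp 1 →
      {r ∈ Set.Ioo (0 : ℝ) 1 | Q r = q} = ∅) := by
  have hE : (0:ℝ) < Real.exp 1 := Real.exp_pos 1
  have hEinv : (0:ℝ) < (Real.exp 1)⁻¹ := by positivity
  have hElt1 : (Real.exp 1)⁻¹ < 1 := inv_lt_one_of_one_lt₀ (by
    have := Real.exp_one_gt_d9; linarith)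
  -- key equivalence
  have key : ∀ r ∈ Ioo (0:ℝ) 1, (Q r = q ↔ g6 r = 1/q) := by
    intro r hr
    have hlog : Real.log r < 0 := Real.log_neg hr.1 hr.2
    have hne : r * Real.log r ≠ 0 := ne_of_lt (mul_neg_of_pos_of_neg hr.1 hlog)
    rw [hQ r hr, div_eq_iff hne, eq_div_iff (ne_of_gt hq)]
    unfold g6
    constructor <;> intro h <;> nlinarith
  refine ⟨?_, ?_, ?_⟩
  · -- q > e : two solutions
    intro hgt
    have h1q : 1/q < (Real.exp 1)⁻¹ := by
      rw [one_div]
      exact inv_strictAnti₀ hE hgt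
    have h1q0 : (0:ℝ) < 1/q := by positivity
    -- a small point with g6 a < 1/q
    have htend : Tendsto g6 (nhdsWithin 0 (Ioi (0:ℝ))) (nhds 0) := by
      have h0 : g6 0 = 0 := by simp [g6]
      have := (g6_cont.tendsto 0).mono_left (nhdsWithin_le_nhds (s := Ioi (0:ℝ)))
      rwa [h0] at this
    have h2 : ∀ᶠ x in nhdsWithin 0 (Ioi (0:ℝ)), g6 x < 1/q :=
      htend.eventually_lt_const h1q0
    have h3 : ∀ᶠ x in nhdsWithin 0 (Ioi (0:ℝ)), x < (Real.exp 1)⁻¹ :=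
      eventually_nhdsWithin_of_eventually_nhds (Filter.Tendsto.eventually_lt_const hEinv tendsto_id)
    have h4 : ∀ᶠ x in nhdsWithin 0 (Ioi (0:ℝ)), (0:ℝ) < x := self_mem_nhdsWithin
    obtain ⟨a, hga, haE, ha0⟩ := (h2.and (h3.and h4)).exists
    -- left solution by IVT
    obtain ⟨r₁, hr₁mem, hr₁⟩ := intermediate_value_Ioo (le_of_lt haE) g6_cont.continuousOn
      (by rw [g6_inv_e]; exact ⟨hga, h1q⟩ : 1/q ∈ Ioo (g6 a) (g6 (Real.exp 1)⁻¹))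
    -- right solution by IVT
    have hg1 : g6 1 = 0 := by simp [g6]
    obtain ⟨r₂, hr₂mem, hr₂⟩ := intermediate_value_Ioo' (le_of_lt hElt1) g6_cont.continuousOn
      (by rw [g6_inv_e, hg1]; exact ⟨h1q0, h1q⟩ : 1/q ∈ Ioo (g6 1) (g6 (Real.exp 1)⁻¹))
    have hr₁I : r₁ ∈ Ioo (0:ℝ) (Real.exp 1)⁻¹ := ⟨lt_trans ha0 hr₁mem.1, hr₁mem.2⟩
    refine ⟨r₁, r₂, hr₁I, hr₂mem, ?_⟩
    have hr₁01 : r₁ ∈ Ioo (0:ℝ) 1 := ⟨hr₁I.1, lt_trans hr₁I.2 hElt1⟩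
    have hr₂01 : r₂ ∈ Ioo (0:ℝ) 1 := ⟨lt_trans hEinv hr₂mem.1, hr₂mem.2⟩
    ext r
    simp only [mem_setOf_eq, mem_insert_iff, mem_singleton_iff]
    constructor
    · rintro ⟨hr01, hQr⟩
      have hgr : g6 r = 1/q := (key r hr01).mp hQr
      rcases lt_trichotomy r (Real.exp 1)⁻¹ with h | h | h
      · left
        exact g6_mono.injOn ⟨hr01.1.le, h.le⟩ ⟨hr₁I.1.le, hr₁I.2.le⟩ (by rw [hgr, hr₁])
      · exfalso
        rw [h, g6_inv_e] at hgr
        exact (ne_of_gt h1q) hgr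
      · right
        exact g6_anti.injOn ⟨h.le, hr01.2.le⟩ ⟨hr₂mem.1.le, hr₂mem.2.le⟩ (by rw [hgr, hr₂])
    · rintro (rfl | rfl)
      · exact ⟨hr₁01, (key r hr₁01).mpr hr₁⟩
      · exact ⟨hr₂01, (key r hr₂01).mpr hr₂⟩
  · -- q = e : unique solution
    intro rfl_q
    subst rfl_q
    ext r
    simp only [mem_setOf_eq, mem_singleton_iff]
    constructor
    · rintro ⟨hr01, hQr⟩
      have hgr : g6 r = (Real.exp 1)⁻¹ := by
        rw [(key r hr01).mp hQr, one_div]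
      rcases le_or_gt r (Real.exp 1)⁻¹ with h | h
      · exact g6_mono.injOn ⟨hr01.1.le, h⟩ ⟨hEinv.le, le_refl _⟩ (by rw [hgr, g6_inv_e])
      · exact g6_anti.injOn ⟨h.le, hr01.2.le⟩ ⟨le_refl _, hElt1.le⟩ (by rw [hgr, g6_inv_e])
    · rintro rfl
      have hmem : (Real.exp 1)⁻¹ ∈ Ioo (0:ℝ) 1 := ⟨hEinv, hElt1⟩
      exact ⟨hmem, (key _ hmem).mpr (by rw [g6_inv_e, one_div])⟩
  · -- q < e : no solution
    intro hlt
    ext r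
    simp only [mem_setOf_eq, mem_empty_iff_false, iff_false, not_and]
    intro hr01 hQr
    have hgr : g6 r = 1/q := (key r hr01).mp hQr
    have h1 : (Real.exp 1)⁻¹ < 1/q := by
      rw [one_div]
      exact inv_strictAnti₀ hq hlt
    have := g6_le hr01
    rw [hgr] at this
    linarith
end

section
/- Let n ≥ 3, set r⋆ = (n−1)^(−1/(n−2)) and Q⋆ = (n−1)^((n−1)/(n−2)), and let Q(r) = (n−2)/(r(1 − r^(n−2))) on (0,1). Then for each real q > 0: if q > Q⋆ there exist exactly two points r ∈ (0,1) with Q(r) = q, one satisfying 0 < r < r⋆ and the other satisfying r⋆ < r < 1; if q = Q⋆ there exists exactly one such point, namely r = r⋆; and if 0 < q < Q⋆ there exists no r ∈ (0,1) with Q(r) = q. -/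
/-- for `n ≥ 3`, trichotomy for `Q(r) = (n−2)/(r(1−r^(n−2))) = q` on `(0,1)`
with critical radius `r⋆ = (n−1)^(−1/(n−2))` and critical value `Q⋆ = (n−1)^((n−1)/(n−2))`:
exactly two solutions (one on each side of `r⋆`) if `q > Q⋆`, exactly `r = r⋆` if `q = Q⋆`,
and no solution if `0 < q < Q⋆`. -/
theorem statement7 (n : ℕ) (hn : 3 ≤ n) (rstar Qstar : ℝ)
    (hrstar : rstar = ((n : ℝ) - 1) ^ (-(1 : ℝ) / ((n : ℝ) - 2)))
    (hQstar : Qstar = ((n : ℝ) - 1) ^ (((n : ℝ) - 1) / ((n : ℝ) - 2)))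
    (Q : ℝ → ℝ)
    (hQ : ∀ r ∈ Set.Ioo (0 : ℝ) 1, Q r = ((n : ℝ) - 2) / (r * (1 - r ^ (n - 2))))
    (q : ℝ) (hq : 0 < q) :
    (Qstar < q →
      ∃ r₁ r₂ : ℝ, r₁ ∈ Set.Ioo 0 rstar ∧ r₂ ∈ Set.Ioo rstar 1 ∧
        {r ∈ Set.Ioo (0 : ℝ) 1 | Q r = q} = {r₁, r₂}) ∧
    (q = Qstar → {r ∈ Set.Ioo (0 : ℝ) 1 | Q r = q} = {rstar}) ∧
    (q < Qstar → {r ∈ Set.Ioo (0 : ℝ) 1 | Q r = q} = ∅) := by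
  have h2n : 2 ≤ n := by omega
  set m : ℕ := n - 2 with hm_def
  have hm1 : 1 ≤ m := by omega
  have hmcast : (m : ℝ) = (n : ℝ) - 2 := by
    rw [hm_def, Nat.cast_sub h2n]; norm_num
  have hn1cast : (n : ℝ) - 1 = (m : ℝ) + 1 := by linarith [hmcast]
  have hmpos : (0 : ℝ) < (m : ℝ) := by
    have h0 : 0 < m := hm1
    exact_mod_cast h0
  set A : ℝ := (m : ℝ) + 1 with hA_def
  have hA1 : (1 : ℝ) < A := by rw [hA_def]; linarith
  have hApos : (0 : ℝ) < A := by linarith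
  have hrstar' : rstar = A ^ (-(1 : ℝ) / (m : ℝ)) := by
    rw [hrstar, hn1cast, ← hmcast]
  have hQstar' : Qstar = A ^ (((m : ℝ) + 1) / (m : ℝ)) := by
    rw [hQstar, hn1cast, ← hmcast]
  have hrs_pos : 0 < rstar := by
    rw [hrstar']; exact Real.rpow_pos_of_pos hApos _
  have hrs_lt1 : rstar < 1 := by
    rw [hrstar']
    exact Real.rpow_lt_one_of_one_lt_of_neg hA1
      (div_neg_of_neg_of_pos (by norm_num) hmpos)
  have hrs_pow : rstar ^ m = A⁻¹ := by
    rw [hrstar', ← Real.rpow_natCast (A ^ (-(1:ℝ)/(m:ℝ))) m,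
      ← Real.rpow_mul hApos.le]
    rw [show (-(1:ℝ)/(m:ℝ)) * (m:ℝ) = -1 by field_simp]
    rw [Real.rpow_neg_one]
  have hQstar_pos : 0 < Qstar := by
    rw [hQstar']; exact Real.rpow_pos_of_pos hApos _
  have hQr : Qstar * rstar = A := by
    rw [hQstar', hrstar', ← Real.rpow_add hApos]
    rw [show ((m:ℝ)+1)/(m:ℝ) + (-(1:ℝ)/(m:ℝ)) = 1 by field_simp; ring]
    exact Real.rpow_one A
  -- the function f
  set f : ℝ → ℝ := fun r => r - r ^ (m + 1) with hf_def
  have hf_cont : Continuous f := by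
    exact continuous_id.sub (continuous_pow (m+1))
  have hf_deriv : ∀ x : ℝ, HasDerivAt f (1 - ((m:ℝ)+1) * x ^ m) x := by
    intro x
    have h1 := (hasDerivAt_id x).sub (hasDerivAt_pow (m+1) x)
    simp only [Nat.cast_add, Nat.cast_one, Nat.add_sub_cancel] at h1; exact h1
  have hmono : StrictMonoOn f (Set.Icc 0 rstar) := by
    apply strictMonoOn_of_deriv_pos (convex_Icc _ _) hf_cont.continuousOn
    intro x hx
    rw [interior_Icc] at hx
    rw [(hf_deriv x).deriv]
    have hlt : x ^ m < rstar ^ m := pow_lt_pow_left₀ hx.2 hx.1.le (by omega)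
    rw [hrs_pow] at hlt
    have : A * x ^ m < 1 := by
      have := mul_lt_mul_of_pos_left hlt hApos
      rwa [mul_inv_cancel₀ hApos.ne'] at this
    rw [← hA_def]; linarith
  have hanti : StrictAntiOn f (Set.Icc rstar 1) := by
    apply strictAntiOn_of_deriv_neg (convex_Icc _ _) hf_cont.continuousOn
    intro x hx
    rw [interior_Icc] at hx
    rw [(hf_deriv x).deriv]
    have hlt : rstar ^ m < x ^ m := pow_lt_pow_left₀ hx.1 hrs_pos.le (by omega)
    rw [hrs_pow] at hlt
    have : 1 < A * x ^ m := by
      have := mul_lt_mul_of_pos_left hlt hApos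
      rwa [mul_inv_cancel₀ hApos.ne'] at this
    rw [← hA_def]; linarith
  have hf0 : f 0 = 0 := by simp [hf_def]
  have hf1 : f 1 = 0 := by simp [hf_def]
  have hfr_key : f rstar * Qstar = (m : ℝ) := by
    have h1 : rstar ^ (m + 1) = A⁻¹ * rstar := by
      rw [pow_succ, hrs_pow]
    have : f rstar = rstar * (1 - A⁻¹) := by simp only [hf_def]; rw [h1]; ring
    rw [this]
    have : rstar * (1 - A⁻¹) * Qstar = Qstar * rstar * (1 - A⁻¹) := by ring
    rw [this, hQr, mul_sub, mul_one, mul_inv_cancel₀ hApos.ne', hA_def]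
    ring
  have hfr_pos : 0 < f rstar := by
    by_contra h
    push_neg at h
    nlinarith
  -- equivalence of equations
  have hiff : ∀ r ∈ Set.Ioo (0:ℝ) 1, (Q r = q ↔ f r = (m:ℝ) / q) := by
    intro r hr
    have hr0 := hr.1
    have hr1 := hr.2
    have hrm : r ^ m < 1 := pow_lt_one₀ hr0.le hr1 (by omega)
    have hd : 0 < r * (1 - r ^ m) := by nlinarith
    have hfd : f r = r * (1 - r ^ m) := by
      simp only [hf_def]; rw [pow_succ]; ring
    rw [hQ r hr, ← hmcast, hfd, div_eq_iff hd.ne', eq_div_iff hq.ne']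
    constructor <;> intro h <;> linarith
  -- max property
  have hmax : ∀ r ∈ Set.Ioo (0:ℝ) 1, f r ≤ f rstar := by
    intro r hr
    rcases le_total r rstar with h | h
    · exact hmono.monotoneOn ⟨hr.1.le, h⟩ ⟨hrs_pos.le, le_refl _⟩ h
    · exact hanti.antitoneOn ⟨le_refl _, hrs_lt1.le⟩ ⟨h, hr.2.le⟩ h
  refine ⟨?_, ?_, ?_⟩
  · -- q > Qstar : two solutions
    intro hgt
    have hc_pos : 0 < (m:ℝ) / q := div_pos hmpos hq
    have hc_lt : (m:ℝ) / q < f rstar := by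
      rw [div_lt_iff₀ hq]
      calc (m:ℝ) = f rstar * Qstar := hfr_key.symm
        _ < f rstar * q := by exact mul_lt_mul_of_pos_left hgt hfr_pos
    obtain ⟨r₁, hr₁, hfr₁⟩ : ∃ r₁ ∈ Set.Ioo (0:ℝ) rstar, f r₁ = (m:ℝ)/q := by
      have := intermediate_value_Ioo hrs_pos.le hf_cont.continuousOn
        (a := (0:ℝ)) (b := rstar)
      rw [hf0] at this
      obtain ⟨x, hx, hfx⟩ := this ⟨hc_pos, hc_lt⟩
      exact ⟨x, hx, hfx⟩
    obtain ⟨r₂, hr₂, hfr₂⟩ : ∃ r₂ ∈ Set.Ioo rstar (1:ℝ), f r₂ = (m:ℝ)/q := by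
      have := intermediate_value_Ioo' hrs_lt1.le hf_cont.continuousOn
        (a := rstar) (b := (1:ℝ))
      rw [hf1] at this
      obtain ⟨x, hx, hfx⟩ := this ⟨hc_pos, hc_lt⟩
      exact ⟨x, hx, hfx⟩
    refine ⟨r₁, r₂, hr₁, hr₂, ?_⟩
    have hr₁mem : r₁ ∈ Set.Ioo (0:ℝ) 1 := ⟨hr₁.1, lt_trans hr₁.2 hrs_lt1⟩
    have hr₂mem : r₂ ∈ Set.Ioo (0:ℝ) 1 := ⟨lt_trans hrs_pos hr₂.1, hr₂.2⟩
    ext r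
    simp only [Set.mem_setOf_eq, Set.mem_insert_iff, Set.mem_singleton_iff]
    constructor
    · rintro ⟨hrmem, hQr⟩
      have hfr : f r = (m:ℝ)/q := (hiff r hrmem).1 hQr
      rcases lt_trichotomy r rstar with h | h | h
      · left
        exact hmono.injOn ⟨hrmem.1.le, h.le⟩ ⟨hr₁.1.le, hr₁.2.le⟩
          (by rw [hfr, hfr₁])
      · exfalso
        have hfrs : f rstar = (m:ℝ)/q := by rw [← h]; exact hfr
        linarith
      · right
        exact hanti.injOn ⟨h.le, hrmem.2.le⟩ ⟨hr₂.1.le, hr₂.2.le⟩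
          (by rw [hfr, hfr₂])
    · rintro (rfl | rfl)
      · exact ⟨hr₁mem, (hiff _ hr₁mem).2 hfr₁⟩
      · exact ⟨hr₂mem, (hiff _ hr₂mem).2 hfr₂⟩
  · -- q = Qstar : one solution
    intro heq
    have hrsmem : rstar ∈ Set.Ioo (0:ℝ) 1 := ⟨hrs_pos, hrs_lt1⟩
    have hfrs : f rstar = (m:ℝ)/q := by
      rw [heq, eq_div_iff hQstar_pos.ne', hfr_key]
    ext r
    simp only [Set.mem_setOf_eq, Set.mem_singleton_iff]
    constructor
    · rintro ⟨hrmem, hQr⟩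
      have hfr : f r = (m:ℝ)/q := (hiff r hrmem).1 hQr
      rcases lt_trichotomy r rstar with h | h | h
      · exfalso
        have := hmono ⟨hrmem.1.le, h.le⟩ ⟨hrs_pos.le, le_refl _⟩ h
        rw [hfr, hfrs] at this; exact lt_irrefl _ this
      · exact h
      · exfalso
        have := hanti ⟨le_refl _, hrs_lt1.le⟩ ⟨h.le, hrmem.2.le⟩ h
        rw [hfr, hfrs] at this; exact lt_irrefl _ this
    · rintro rfl
      exact ⟨hrsmem, (hiff _ hrsmem).2 hfrs⟩
  · -- q < Qstar : no solution
    intro hlt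
    have hc_gt : f rstar < (m:ℝ)/q := by
      rw [lt_div_iff₀ hq]
      calc f rstar * q < f rstar * Qstar := mul_lt_mul_of_pos_left hlt hfr_pos
        _ = (m:ℝ) := hfr_key
    ext r
    simp only [Set.mem_setOf_eq, Set.mem_empty_iff_false, iff_false, not_and]
    intro hrmem hQr
    have hfr : f r = (m:ℝ)/q := (hiff r hrmem).1 hQr
    have := hmax r hrmem
    rw [hfr] at this
    linarith
end

section
/- Let n ≥ 3, r⋆ = (n−1)^(−1/(n−2)), Q⋆ = (n−1)^((n−1)/(n−2)), Q(r) = (n−2)/(r(1 − r^(n−2))), and for q > Q⋆ let r₁(q) ∈ (0, r⋆) and r₂(q) ∈ (r⋆, 1) be the unique solutions of Q(r) = q in the respective intervals. Then the open unit ball of EuclideanSpace ℝ (Fin n) is the disjoint union of the singleton {0}, the sphere {x : ‖x‖ = r⋆}, the spheres {x : ‖x‖ = r₁(q)} for q > Q⋆, and the spheres {x : ‖x‖ = r₂(q)} for q > Q⋆; that is, these sets are pairwise disjoint and their union equals {x : ‖x‖ < 1}. -/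
lemma bern_gmax (m : ℕ) (hm : 1 ≤ m) (c : ℝ) (hc0 : 0 < c) (hc1 : c < 1)
    (hcm : ((m : ℝ) + 1) * c ^ m = 1) (r : ℝ) (hr : r ∈ Set.Ioo (0:ℝ) 1) (hne : r ≠ c) :
    r * (1 - r ^ m) < c * (1 - c ^ m) := by
  set g : ℝ → ℝ := fun x => x - x ^ (m + 1) with hg
  have hgid : ∀ x : ℝ, x * (1 - x ^ m) = g x := by
    intro x; simp only [hg]; ring
  have hderiv : ∀ x : ℝ, HasDerivAt g (1 - ((m : ℝ) + 1) * x ^ m) x := by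
    intro x
    have h1 := (hasDerivAt_id x).sub (hasDerivAt_pow (m + 1) x)
    simp at h1; exact h1
  have hcont : Continuous g := by fun_prop
  have hmono : StrictMonoOn g (Set.Icc 0 c) := by
    apply strictMonoOn_of_deriv_pos (convex_Icc 0 c) hcont.continuousOn
    intro x hx
    rw [interior_Icc] at hx
    rw [(hderiv x).deriv]
    have hxm : x ^ m < c ^ m := pow_lt_pow_left₀ hx.2 hx.1.le (by omega)
    nlinarith [pow_nonneg hx.1.le m]
  have hanti : StrictAntiOn g (Set.Icc c 1) := by
    apply strictAntiOn_of_deriv_neg (convex_Icc c 1) hcont.continuousOn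
    intro x hx
    rw [interior_Icc] at hx
    rw [(hderiv x).deriv]
    have hxm : c ^ m < x ^ m := pow_lt_pow_left₀ hx.1 hc0.le (by omega)
    nlinarith
  rw [hgid, hgid]
  rcases lt_or_gt_of_ne hne with h | h
  · exact hmono ⟨hr.1.le, h.le⟩ ⟨hc0.le, le_refl c⟩ h
  · exact hanti ⟨le_refl c, hc1.le⟩ ⟨h.le, hr.2.le⟩ h


/-- foliation structure of the radial solutions of Bernoulli's problem in
the unit ball of `ℝⁿ` (`n ≥ 3`): the origin, the critical sphere `{‖x‖ = r⋆}`, and the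
spheres `{‖x‖ = r₁(q)}`, `{‖x‖ = r₂(q)}` for `q > Q⋆` are pairwise disjoint and their
union is the open unit ball. -/
theorem statement12 (n : ℕ) (hn : 3 ≤ n) (rstar Qstar : ℝ)
    (hrstar : rstar = ((n : ℝ) - 1) ^ (-(1 : ℝ) / ((n : ℝ) - 2)))
    (hQstar : Qstar = ((n : ℝ) - 1) ^ (((n : ℝ) - 1) / ((n : ℝ) - 2)))
    (Q : ℝ → ℝ)
    (hQ : ∀ r ∈ Set.Ioo (0 : ℝ) 1, Q r = ((n : ℝ) - 2) / (r * (1 - r ^ (n - 2))))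
    (r₁ r₂ : ℝ → ℝ)
    (hr₁ : ∀ q : ℝ, Qstar < q →
      r₁ q ∈ Set.Ioo 0 rstar ∧ Q (r₁ q) = q ∧
      ∀ r ∈ Set.Ioo 0 rstar, Q r = q → r = r₁ q)
    (hr₂ : ∀ q : ℝ, Qstar < q →
      r₂ q ∈ Set.Ioo rstar 1 ∧ Q (r₂ q) = q ∧
      ∀ r ∈ Set.Ioo rstar 1, Q r = q → r = r₂ q) :
    -- the union is the open unit ball
    ({(0 : EuclideanSpace ℝ (Fin n))} ∪
      {x : EuclideanSpace ℝ (Fin n) | ‖x‖ = rstar} ∪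
      (⋃ q ∈ Set.Ioi Qstar, {x : EuclideanSpace ℝ (Fin n) | ‖x‖ = r₁ q}) ∪
      (⋃ q ∈ Set.Ioi Qstar, {x : EuclideanSpace ℝ (Fin n) | ‖x‖ = r₂ q}) =
      {x : EuclideanSpace ℝ (Fin n) | ‖x‖ < 1}) ∧
    -- pairwise disjointness of the pieces
    (Disjoint {(0 : EuclideanSpace ℝ (Fin n))}
      {x : EuclideanSpace ℝ (Fin n) | ‖x‖ = rstar}) ∧
    (∀ q ∈ Set.Ioi Qstar, Disjoint {(0 : EuclideanSpace ℝ (Fin n))}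
      {x : EuclideanSpace ℝ (Fin n) | ‖x‖ = r₁ q}) ∧
    (∀ q ∈ Set.Ioi Qstar, Disjoint {(0 : EuclideanSpace ℝ (Fin n))}
      {x : EuclideanSpace ℝ (Fin n) | ‖x‖ = r₂ q}) ∧
    (∀ q ∈ Set.Ioi Qstar, Disjoint {x : EuclideanSpace ℝ (Fin n) | ‖x‖ = rstar}
      {x : EuclideanSpace ℝ (Fin n) | ‖x‖ = r₁ q}) ∧
    (∀ q ∈ Set.Ioi Qstar, Disjoint {x : EuclideanSpace ℝ (Fin n) | ‖x‖ = rstar}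
      {x : EuclideanSpace ℝ (Fin n) | ‖x‖ = r₂ q}) ∧
    (∀ q ∈ Set.Ioi Qstar, ∀ q' ∈ Set.Ioi Qstar,
      Disjoint {x : EuclideanSpace ℝ (Fin n) | ‖x‖ = r₁ q}
        {x : EuclideanSpace ℝ (Fin n) | ‖x‖ = r₂ q'}) ∧
    (∀ q ∈ Set.Ioi Qstar, ∀ q' ∈ Set.Ioi Qstar, q ≠ q' →
      Disjoint {x : EuclideanSpace ℝ (Fin n) | ‖x‖ = r₁ q}
        {x : EuclideanSpace ℝ (Fin n) | ‖x‖ = r₁ q'}) ∧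
    (∀ q ∈ Set.Ioi Qstar, ∀ q' ∈ Set.Ioi Qstar, q ≠ q' →
      Disjoint {x : EuclideanSpace ℝ (Fin n) | ‖x‖ = r₂ q}
        {x : EuclideanSpace ℝ (Fin n) | ‖x‖ = r₂ q'}) := by
  have hn3 : (3:ℝ) ≤ (n:ℝ) := by exact_mod_cast hn
  set a : ℝ := (n:ℝ) - 1 with hadef
  have ha1 : 1 < a := by simp only [hadef]; linarith
  have hapos : 0 < a := by linarith
  set m : ℕ := n - 2 with hmdef
  have hm1 : 1 ≤ m := by omega
  have hmr : (m:ℝ) = (n:ℝ) - 2 := by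
    rw [hmdef, Nat.cast_sub (by omega : 2 ≤ n)]; norm_num
  have ham : a = (m:ℝ) + 1 := by rw [hmr]; simp only [hadef]; ring
  have hr0 : 0 < rstar := by rw [hrstar]; exact Real.rpow_pos_of_pos hapos _
  have hr1 : rstar < 1 := by
    rw [hrstar]
    exact Real.rpow_lt_one_of_one_lt_of_neg ha1
      (div_neg_of_neg_of_pos (by norm_num) (by linarith))
  have hinv : rstar ^ m = a⁻¹ := by
    rw [hrstar, ← Real.rpow_natCast (a ^ (-(1:ℝ) / ((n:ℝ) - 2))) m,
      ← Real.rpow_mul hapos.le]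
    rw [show (-(1:ℝ) / ((n:ℝ) - 2)) * (m:ℝ) = -1 by
      rw [← hmr]; field_simp]
    rw [Real.rpow_neg_one]
  have hcm : ((m:ℝ) + 1) * rstar ^ m = 1 := by
    rw [hinv, ← ham]; exact mul_inv_cancel₀ hapos.ne'
  have hQs : Qstar = a / rstar := by
    have hQsr : Qstar * rstar = a := by
      rw [hQstar, hrstar, ← Real.rpow_add hapos]
      rw [show ((n:ℝ) - 1) / ((n:ℝ) - 2) + -(1:ℝ) / ((n:ℝ) - 2) = 1 by
        rw [← add_div]
        rw [show (n:ℝ) - 1 + -1 = (n:ℝ) - 2 by ring]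
        exact div_self (by linarith)]
      exact Real.rpow_one a
    field_simp [hr0.ne'] at hQsr ⊢
    linarith [hQsr]
  have key : ∀ r ∈ Set.Ioo (0:ℝ) 1, r ≠ rstar → Qstar < Q r := by
    intro r hr hne
    rw [hQ r hr]
    have hg := bern_gmax m hm1 rstar hr0 hr1 hcm r hr hne
    have hrm1 : r ^ m < 1 := pow_lt_one₀ hr.1.le hr.2 (by omega)
    have hgr : 0 < r * (1 - r ^ m) := mul_pos hr.1 (by linarith)
    rw [← hmr, hQs, div_lt_div_iff₀ hr0 hgr]
    have hms : (m:ℝ) * rstar = a * (rstar * (1 - rstar ^ m)) := by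
      rw [hinv, ham]; field_simp; ring
    rw [hms]
    exact (mul_lt_mul_iff_right₀ hapos).mpr hg
  have hdisj : ∀ (s t : ℝ), s ≠ t →
      Disjoint {x : EuclideanSpace ℝ (Fin n) | ‖x‖ = s}
        {x : EuclideanSpace ℝ (Fin n) | ‖x‖ = t} := by
    intro s t hst
    rw [Set.disjoint_left]
    intro x hx hx'
    exact hst (hx.symm.trans hx')
  have h0set : ({(0 : EuclideanSpace ℝ (Fin n))} : Set (EuclideanSpace ℝ (Fin n))) =
      {x : EuclideanSpace ℝ (Fin n) | ‖x‖ = 0} := by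
    ext x; simp [norm_eq_zero]
  refine ⟨?_, ?_, ?_, ?_, ?_, ?_, ?_, ?_, ?_⟩
  · ext x
    simp only [Set.mem_union, Set.mem_singleton_iff, Set.mem_setOf_eq, Set.mem_iUnion,
      Set.mem_Ioi, exists_prop]
    constructor
    · rintro (((rfl | hx) | ⟨q, hq, hx⟩) | ⟨q, hq, hx⟩)
      · simp
      · rw [hx]; exact hr1
      · rw [hx]; exact lt_trans (hr₁ q hq).1.2 hr1
      · rw [hx]; exact (hr₂ q hq).1.2
    · intro hx
      by_cases h0 : x = 0
      · exact Or.inl (Or.inl (Or.inl h0))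
      have hx0 : 0 < ‖x‖ := norm_pos_iff.mpr h0
      by_cases hs : ‖x‖ = rstar
      · exact Or.inl (Or.inl (Or.inr hs))
      have hq := key ‖x‖ ⟨hx0, hx⟩ hs
      rcases lt_or_gt_of_ne hs with h | h
      · exact Or.inl (Or.inr ⟨Q ‖x‖, hq, (hr₁ _ hq).2.2 ‖x‖ ⟨hx0, h⟩ rfl⟩)
      · exact Or.inr ⟨Q ‖x‖, hq, (hr₂ _ hq).2.2 ‖x‖ ⟨h, hx⟩ rfl⟩
  · rw [h0set]; exact hdisj 0 rstar hr0.ne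
  · intro q hq; rw [h0set]; exact hdisj _ _ (hr₁ q hq).1.1.ne
  · intro q hq; rw [h0set]; exact hdisj _ _ (hr0.trans (hr₂ q hq).1.1).ne
  · intro q hq; exact hdisj _ _ (hr₁ q hq).1.2.ne'
  · intro q hq; exact hdisj _ _ (hr₂ q hq).1.1.ne
  · intro q hq q' hq'; exact hdisj _ _ ((hr₁ q hq).1.2.trans (hr₂ q' hq').1.1).ne
  · intro q hq q' hq' hne
    exact hdisj _ _ (fun heq => hne (by rw [← (hr₁ q hq).2.1, heq, (hr₁ q' hq').2.1]))
  · intro q hq q' hq' hne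
    exact hdisj _ _ (fun heq => hne (by rw [← (hr₂ q hq).2.1, heq, (hr₂ q' hq').2.1]))
end

section
/- Let n ≥ 2 and k ≥ 0 be natural numbers and let p : EuclideanSpace ℝ (Fin n) → ℝ be (the evaluation of) a homogeneous polynomial of degree k in the coordinates which is harmonic on all of EuclideanSpace ℝ (Fin n). Then the function x ↦ ‖x‖^(2−n−2k) · p(x) is harmonic on EuclideanSpace ℝ (Fin n) \ {0}. -/
open MvPolynomial in
private lemma contDiff_eval_aux {n : ℕ} (P : MvPolynomial (Fin n) ℝ) :
    ContDiff ℝ ⊤ (fun x : EuclideanSpace ℝ (Fin n) => MvPolynomial.eval (fun i => x i) P) := by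
  induction P using MvPolynomial.induction_on with
  | C a => simpa using contDiff_const (c := a)
  | add p q hp hq => simpa [map_add] using hp.add hq
  | mul_X p i hp =>
      simp only [map_mul, eval_X]
      exact hp.mul (EuclideanSpace.proj (𝕜 := ℝ) i).contDiff

open MvPolynomial in
private lemma eval_smul_aux {n k : ℕ} (P : MvPolynomial (Fin n) ℝ) (hP : P.IsHomogeneous k)
    (c : ℝ) (x : Fin n → ℝ) :
    MvPolynomial.eval (fun i => c * x i) P = c ^ k * MvPolynomial.eval x P := by
  rw [eval_eq, eval_eq, Finset.mul_sum]
  refine Finset.sum_congr rfl fun d hd => ?_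
  have hdeg : ∑ i ∈ d.support, d i = k := by
    have h1 : (Finsupp.weight 1) d = k := hP (mem_support_iff.mp hd)
    have h2 : Finsupp.degree d = (Finsupp.weight 1) d := by
      rw [Finsupp.degree_eq_weight_one]; rfl
    have h3 : Finsupp.degree d = ∑ i ∈ d.support, d i := rfl
    omega
  rw [show (∏ i ∈ d.support, (c * x i) ^ d i)
      = (∏ i ∈ d.support, c ^ d i) * ∏ i ∈ d.support, x i ^ d i by
    rw [← Finset.prod_mul_distrib]; exact Finset.prod_congr rfl fun i _ => mul_pow _ _ _]
  rw [Finset.prod_pow_eq_pow_sum, hdeg]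
  ring

open MvPolynomial in
private lemma euler_aux {n k : ℕ} {p : EuclideanSpace ℝ (Fin n) → ℝ}
    (P : MvPolynomial (Fin n) ℝ) (hP : P.IsHomogeneous k)
    (hp : ∀ x : EuclideanSpace ℝ (Fin n), p x = MvPolynomial.eval (fun i => x i) P)
    (x : EuclideanSpace ℝ (Fin n)) :
    ∑ i : Fin n, x i * fderiv ℝ p x (EuclideanSpace.single i 1) = (k : ℝ) * p x := by
  have pC : ContDiff ℝ ⊤ p := by
    have hfun : p = fun x : EuclideanSpace ℝ (Fin n) => MvPolynomial.eval (fun i => x i) P :=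
      funext hp
    rw [hfun]; exact contDiff_eval_aux P
  have h1 : HasDerivAt (fun t : ℝ => p (t • x)) (fderiv ℝ p x x) 1 := by
    have hsm : HasDerivAt (fun t : ℝ => t • x) ((1:ℝ) • x) 1 :=
      (hasDerivAt_id (1:ℝ)).smul_const x
    have hpd : HasFDerivAt p (fderiv ℝ p ((1:ℝ) • x)) ((1:ℝ) • x) :=
      (pC.differentiable (by simp) ((1:ℝ) • x)).hasFDerivAt
    have := hpd.comp_hasDerivAt 1 hsm
    simp only [one_smul] at this; exact this
  have h2 : HasDerivAt (fun t : ℝ => p (t • x)) ((k : ℝ) * p x) 1 := by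
    have heq : (fun t : ℝ => p (t • x)) = fun t : ℝ => t ^ k * p x := by
      funext t
      rw [hp (t • x), hp x, show (fun i => (t • x) i) = fun i => t * x i from rfl,
        eval_smul_aux P hP]
    rw [heq]
    simpa using (hasDerivAt_pow k (1:ℝ)).mul_const (p x)
  have hxx : fderiv ℝ p x x = (k : ℝ) * p x := h1.unique h2
  have hdec : ∑ i : Fin n, x i • EuclideanSpace.single i (1:ℝ) = x := by
    have := (EuclideanSpace.basisFun (Fin n) ℝ).sum_repr x
    simpa [EuclideanSpace.basisFun_apply, EuclideanSpace.basisFun_repr] using this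
  calc ∑ i : Fin n, x i * fderiv ℝ p x (EuclideanSpace.single i 1)
      = fderiv ℝ p x (∑ i : Fin n, x i • EuclideanSpace.single i (1:ℝ)) := by
        rw [map_sum]; simp [smul_eq_mul]
    _ = (k : ℝ) * p x := by rw [hdec, hxx]

/-- the Kelvin transform `x ↦ ‖x‖^(2−n−2k) p(x)` of a homogeneous harmonic
polynomial `p` of degree `k` on `ℝⁿ` (`n ≥ 2`) is harmonic away from the origin. -/
theorem statement15 (n k : ℕ) (hn : 2 ≤ n)
    (p : EuclideanSpace ℝ (Fin n) → ℝ)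
    (hpoly : ∃ P : MvPolynomial (Fin n) ℝ, P.IsHomogeneous k ∧
      ∀ x : EuclideanSpace ℝ (Fin n), p x = MvPolynomial.eval (fun i => x i) P)
    (hharm : IsHarmonicOn p Set.univ) :
    IsHarmonicOn (fun x => ‖x‖ ^ ((2 : ℝ) - n - 2 * k) * p x)
      {x : EuclideanSpace ℝ (Fin n) | x ≠ 0} := by
  classical
  obtain ⟨P, hP, hpeq⟩ := hpoly
  have pC : ContDiff ℝ ⊤ p := by
    have hfun : p = fun x : EuclideanSpace ℝ (Fin n) => MvPolynomial.eval (fun i => x i) P := funext hpeq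
    rw [hfun]; exact contDiff_eval_aux P
  have hpd : Differentiable ℝ p := pC.differentiable (by simp)
  have hp'C : ContDiff ℝ ⊤ (fderiv ℝ p) := pC.fderiv_right le_top
  have hp'd : Differentiable ℝ (fderiv ℝ p) := hp'C.differentiable (by simp)
  set β : ℝ := ((2:ℝ) - n - 2 * k) / 2 with hβ
  -- rewrite the norm-power
  have hfeq : (fun x : EuclideanSpace ℝ (Fin n) => ‖x‖ ^ ((2 : ℝ) - n - 2 * k) * p x)
      = fun x : EuclideanSpace ℝ (Fin n) => (‖x‖ ^ 2 : ℝ) ^ β * p x := by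
    funext x
    congr 1
    rw [← Real.rpow_natCast ‖x‖ 2, ← Real.rpow_mul (norm_nonneg x)]
    congr 1
    push_cast
    rw [hβ]; ring
  rw [hfeq]
  have hU : IsOpen {x : EuclideanSpace ℝ (Fin n) | x ≠ 0} := isOpen_compl_singleton
  -- derivative facts
  have hg : ∀ y : EuclideanSpace ℝ (Fin n), HasFDerivAt (fun z : EuclideanSpace ℝ (Fin n) => (‖z‖ ^ 2 : ℝ)) (2 • (innerSL ℝ) y) y :=
    fun y => (hasStrictFDerivAt_norm_sq y).hasFDerivAt
  have hgne : ∀ (y : EuclideanSpace ℝ (Fin n)), y ≠ 0 → (‖y‖ ^ 2 : ℝ) ≠ 0 := by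
    intro y hy
    exact pow_ne_zero 2 (norm_ne_zero_iff.mpr hy)
  have hrpow : ∀ (y : EuclideanSpace ℝ (Fin n)) (hy : y ≠ 0) (c : ℝ),
      HasFDerivAt (fun z : EuclideanSpace ℝ (Fin n) => (‖z‖ ^ 2 : ℝ) ^ c)
        ((c * (‖y‖ ^ 2 : ℝ) ^ (c - 1)) • (2 • (innerSL ℝ) y)) y := by
    intro y hy c
    have h1 : HasDerivAt (fun t : ℝ => t ^ c) (c * (‖y‖ ^ 2 : ℝ) ^ (c - 1)) (‖y‖ ^ 2 : ℝ) :=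
      (Real.hasStrictDerivAt_rpow_const (Or.inl (hgne y hy))).hasDerivAt
    have := h1.comp_hasFDerivAt y (hg y)
    exact this
  -- first derivative of f applied to basis vectors, on U
  have hf1 : ∀ (y : EuclideanSpace ℝ (Fin n)) (hy : y ≠ 0),
      HasFDerivAt (fun z : EuclideanSpace ℝ (Fin n) => (‖z‖ ^ 2 : ℝ) ^ β * p z)
        ((‖y‖ ^ 2 : ℝ) ^ β • fderiv ℝ p y
          + p y • ((β * (‖y‖ ^ 2 : ℝ) ^ (β - 1)) • (2 • (innerSL ℝ) y))) y :=
    fun y hy => (hrpow y hy β).mul (hpd y).hasFDerivAt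
  -- value form of first directional derivative
  have hF : ∀ (i : Fin n) (y : EuclideanSpace ℝ (Fin n)) (hy : y ≠ 0),
      fderiv ℝ (fun z : EuclideanSpace ℝ (Fin n) => (‖z‖ ^ 2 : ℝ) ^ β * p z) y (EuclideanSpace.single i 1)
        = (‖y‖ ^ 2 : ℝ) ^ β * fderiv ℝ p y (EuclideanSpace.single i 1)
          + (2 * β) * ((‖y‖ ^ 2 : ℝ) ^ (β - 1) * (p y * y i)) := by
    intro i y hy
    rw [(hf1 y hy).fderiv]
    simp [EuclideanSpace.inner_single_right, smul_eq_mul]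
    ring
  -- ContDiffOn part
  constructor
  · intro x hx
    have hx0 : x ≠ 0 := hx
    have h1 : ContDiffAt ℝ 2 (fun z : EuclideanSpace ℝ (Fin n) => (‖z‖ ^ 2 : ℝ) ^ β) x := by
      have hn2 : ContDiffAt ℝ 2 (fun z : EuclideanSpace ℝ (Fin n) => (‖z‖ ^ 2 : ℝ)) x :=
        (contDiff_norm_sq (𝕜 := ℝ)).contDiffAt
      exact (Real.contDiffAt_rpow_const_of_ne (hgne x hx0)).comp x hn2
    exact ((h1.mul (pC.contDiffAt.of_le le_top)).contDiffWithinAt)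
  -- Laplacian part
  · intro x hx
    have hx0 : x ≠ 0 := hx
    set e : Fin n → EuclideanSpace ℝ (Fin n) := fun i => EuclideanSpace.single i (1:ℝ) with he
    set G : ℝ := (‖x‖ ^ 2 : ℝ) with hG
    have hGpos : 0 < G := by rw [hG]; exact pow_pos (norm_pos_iff.mpr hx0) 2
    -- second derivative of each term
    have key : ∀ i : Fin n,
        fderiv ℝ (fun y : EuclideanSpace ℝ (Fin n) => fderiv ℝ (fun z : EuclideanSpace ℝ (Fin n) => (‖z‖ ^ 2 : ℝ) ^ β * p z) y
            (EuclideanSpace.single i 1)) x (EuclideanSpace.single i 1)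
          = G ^ β * (fderiv ℝ (fun y : EuclideanSpace ℝ (Fin n) => fderiv ℝ p y (EuclideanSpace.single i 1)) x
              (EuclideanSpace.single i 1))
            + (4 * β * G ^ (β - 1)) * (x i * fderiv ℝ p x (EuclideanSpace.single i 1))
            + (2 * β * G ^ (β - 1)) * p x
            + (4 * β * (β - 1) * G ^ (β - 2)) * (x i ^ 2 * p x) := by
      intro i
      -- replace the function by its explicit form near x
      have hev : (fun y : EuclideanSpace ℝ (Fin n) => fderiv ℝ (fun z : EuclideanSpace ℝ (Fin n) => (‖z‖ ^ 2 : ℝ) ^ β * p z) y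
            (EuclideanSpace.single i 1))
          =ᶠ[nhds x] (fun y : EuclideanSpace ℝ (Fin n) => (‖y‖ ^ 2 : ℝ) ^ β * fderiv ℝ p y (EuclideanSpace.single i 1)
            + (2 * β) * ((‖y‖ ^ 2 : ℝ) ^ (β - 1) * (p y * y i))) := by
        filter_upwards [hU.mem_nhds hx0] with y hy
        exact hF i y hy
      rw [hev.fderiv_eq]
      -- derivative of p' applied
      have hu : HasFDerivAt (fun y : EuclideanSpace ℝ (Fin n) => fderiv ℝ p y (EuclideanSpace.single i 1))
          ((ContinuousLinearMap.apply ℝ ℝ (EuclideanSpace.single i (1:ℝ))).comp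
            (fderiv ℝ (fderiv ℝ p) x)) x :=
        (ContinuousLinearMap.apply ℝ ℝ (EuclideanSpace.single i (1:ℝ))).hasFDerivAt.comp x
          (hp'd x).hasFDerivAt
      have hproj : HasFDerivAt (fun y : EuclideanSpace ℝ (Fin n) => y i)
          (EuclideanSpace.proj (𝕜 := ℝ) i : EuclideanSpace ℝ (Fin n) →L[ℝ] ℝ) x :=
        (EuclideanSpace.proj (𝕜 := ℝ) i).hasFDerivAt
      have hA : HasFDerivAt
          (fun y : EuclideanSpace ℝ (Fin n) => (‖y‖ ^ 2 : ℝ) ^ β * fderiv ℝ p y (EuclideanSpace.single i 1)) _ x :=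
        (hrpow x hx0 β).mul hu
      have hB0 : HasFDerivAt (fun y : EuclideanSpace ℝ (Fin n) => p y * y i) _ x :=
        (hpd x).hasFDerivAt.mul hproj
      have hB1 : HasFDerivAt
          (fun y : EuclideanSpace ℝ (Fin n) => (‖y‖ ^ 2 : ℝ) ^ (β - 1) * (p y * y i)) _ x :=
        (hrpow x hx0 (β - 1)).mul hB0
      have hB : HasFDerivAt
          (fun y : EuclideanSpace ℝ (Fin n) => (2 * β) * ((‖y‖ ^ 2 : ℝ) ^ (β - 1) * (p y * y i))) _ x :=
        hB1.const_mul (2 * β)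
      have htot : HasFDerivAt (fun y : EuclideanSpace ℝ (Fin n) => (‖y‖ ^ 2 : ℝ) ^ β * fderiv ℝ p y (EuclideanSpace.single i 1)
          + (2 * β) * ((‖y‖ ^ 2 : ℝ) ^ (β - 1) * (p y * y i))) _ x := hA.add hB
      rw [htot.fderiv]
      -- the Laplacian-term rewrite
      have hLap : fderiv ℝ (fun y : EuclideanSpace ℝ (Fin n) => fderiv ℝ p y (EuclideanSpace.single i 1)) x
          = (ContinuousLinearMap.apply ℝ ℝ (EuclideanSpace.single i (1:ℝ))).comp
            (fderiv ℝ (fderiv ℝ p) x) := hu.fderiv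
      rw [hLap]
      simp only [ContinuousLinearMap.add_apply, ContinuousLinearMap.smul_apply,
        ContinuousLinearMap.comp_apply, ContinuousLinearMap.apply_apply, smul_eq_mul,
        innerSL_apply_apply, nsmul_eq_mul]
      rw [show (inner ℝ x (EuclideanSpace.single i (1:ℝ)) : ℝ) = x i from by
          simp [EuclideanSpace.inner_single_right],
        show (EuclideanSpace.proj (𝕜 := ℝ) i : EuclideanSpace ℝ (Fin n) →L[ℝ] ℝ)
            (EuclideanSpace.single i (1:ℝ)) = 1 from by simp,
        show β - 1 - 1 = β - 2 from by ring, ← hG]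
      ring
    rw [Finset.sum_congr rfl (fun i _ => key i)]
    have hL : ∑ i : Fin n, fderiv ℝ (fun y : EuclideanSpace ℝ (Fin n) => fderiv ℝ p y (EuclideanSpace.single i 1)) x
        (EuclideanSpace.single i 1) = 0 := hharm.2 x (Set.mem_univ x)
    have hEuler : ∑ i : Fin n, x i * fderiv ℝ p x (EuclideanSpace.single i 1) = (k : ℝ) * p x :=
      euler_aux P hP hpeq x
    have hsumsq : ∑ i : Fin n, x i ^ 2 = G := by
      rw [hG, EuclideanSpace.norm_eq, Real.sq_sqrt (by positivity)]
      exact Finset.sum_congr rfl fun i _ => by rw [Real.norm_eq_abs, sq_abs]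
    have hGpow : G ^ (β - 2) * G = G ^ (β - 1) := by
      rw [show G ^ (β-2) * G = G ^ (β-2) * G ^ (1:ℝ) by rw [Real.rpow_one],
        ← Real.rpow_add hGpos]
      congr 1; ring
    have hcoef : 4 * β * (k:ℝ) + (n:ℝ) * (2 * β) + 4 * β * (β - 1) = 0 := by
      rw [hβ]; push_cast; ring
    calc (∑ i : Fin n,
          (G ^ β * (fderiv ℝ (fun y : EuclideanSpace ℝ (Fin n) => fderiv ℝ p y (EuclideanSpace.single i 1)) x
              (EuclideanSpace.single i 1))
            + (4 * β * G ^ (β - 1)) * (x i * fderiv ℝ p x (EuclideanSpace.single i 1))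
            + (2 * β * G ^ (β - 1)) * p x
            + (4 * β * (β - 1) * G ^ (β - 2)) * (x i ^ 2 * p x)))
        = G ^ β * (∑ i : Fin n, fderiv ℝ (fun y : EuclideanSpace ℝ (Fin n) => fderiv ℝ p y
              (EuclideanSpace.single i 1)) x (EuclideanSpace.single i 1))
          + (4 * β * G ^ (β - 1)) * (∑ i : Fin n, x i * fderiv ℝ p x
              (EuclideanSpace.single i 1))
          + (n : ℝ) * ((2 * β * G ^ (β - 1)) * p x)
          + (4 * β * (β - 1) * G ^ (β - 2)) * ((∑ i : Fin n, x i ^ 2) * p x) := by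
          simp only [Finset.sum_add_distrib, ← Finset.mul_sum, Finset.sum_const,
            Finset.card_univ, Fintype.card_fin, nsmul_eq_mul]
          rw [← Finset.sum_mul]
          ring
      _ = 0 := by
          rw [hL, hEuler, hsumsq]
          rw [show (4 * β * (β - 1) * G ^ (β - 2)) * (G * p x)
              = (4 * β * (β - 1)) * (G ^ (β - 2) * G) * p x by ring, hGpow]
          rw [mul_zero]
          linear_combination (G ^ (β - 1) * p x) * hcoef
end

section
/- Let n ≥ 2 and k ≥ 1 be natural numbers and let p : EuclideanSpace ℝ (Fin n) → ℝ be (the evaluation of) a homogeneous polynomial of degree k in the coordinates which is harmonic on all of EuclideanSpace ℝ (Fin n). Then the function H(x) = (1 − ‖x‖^(2−n−2k)) · p(x) is harmonic on EuclideanSpace ℝ (Fin n) \ {0} and vanishes at every point x with ‖x‖ = 1. -/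
open MvPolynomial

namespace Statement16Aux

noncomputable def evalP {n : ℕ} (Q : MvPolynomial (Fin n) ℝ) (x : EuclideanSpace ℝ (Fin n)) : ℝ :=
  MvPolynomial.eval (fun i => x i) Q

noncomputable def gradP {n : ℕ} (Q : MvPolynomial (Fin n) ℝ) (x : EuclideanSpace ℝ (Fin n)) :
    EuclideanSpace ℝ (Fin n) →L[ℝ] ℝ :=
  ∑ i : Fin n, evalP (MvPolynomial.pderiv i Q) x • EuclideanSpace.proj i

lemma gradP_apply {n : ℕ} (Q : MvPolynomial (Fin n) ℝ) (x v : EuclideanSpace ℝ (Fin n)) :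
    gradP Q x v = ∑ i : Fin n, evalP (MvPolynomial.pderiv i Q) x * v i := by
  simp [gradP]

lemma hasFDerivAt_evalP {n : ℕ} (Q : MvPolynomial (Fin n) ℝ) (x : EuclideanSpace ℝ (Fin n)) :
    HasFDerivAt (evalP Q) (gradP Q x) x := by
  induction Q using MvPolynomial.induction_on generalizing x with
  | C a =>
    have h1 : evalP (n := n) (C a) = fun _ => a := by
      funext y; simp [evalP]
    have h2 : gradP (n := n) (C a) x = 0 := by
      ext v; simp [gradP_apply, pderiv_C, evalP]
    rw [h1, h2]; exact hasFDerivAt_const a x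
  | add Q R hQ hR =>
    have h1 : evalP (Q + R) = fun y => evalP Q y + evalP R y := by
      funext y; simp [evalP]
    have h2 : gradP (Q + R) x = gradP Q x + gradP R x := by
      ext v; simp [gradP_apply, evalP, Finset.sum_add_distrib, add_mul]
    rw [h1, h2]; exact (hQ x).add (hR x)
  | mul_X Q j hQ =>
    have h1 : evalP (Q * X j) = fun y => evalP Q y * y j := by
      funext y; simp [evalP]
    have h2 : gradP (Q * X j) x =
        evalP Q x • (EuclideanSpace.proj j) + x j • gradP Q x := by
      ext v
      simp only [gradP_apply, ContinuousLinearMap.add_apply, ContinuousLinearMap.coe_smul',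
        Pi.smul_apply, smul_eq_mul, PiLp.proj_apply]
      classical
      have key : ∀ i : Fin n, evalP (pderiv i (Q * X j)) x * v i =
          evalP (pderiv i Q) x * x j * v i
            + (if i = j then evalP Q x * v j else 0) := by
        intro i
        rcases eq_or_ne i j with h | h
        · subst h; simp only [pderiv_mul, pderiv_X_self, evalP, map_add, map_mul, eval_X,
            mul_one, if_true]; ring
        · simp only [pderiv_mul, pderiv_X_of_ne h.symm, evalP, map_add, map_mul, eval_X,
            map_zero, mul_zero, add_zero, if_neg h]
      rw [Finset.sum_congr rfl fun i _ => key i, Finset.sum_add_distrib,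
        Finset.sum_ite_eq' Finset.univ j fun _ => evalP Q x * v j]
      simp only [Finset.mem_univ, if_true]
      rw [add_comm]
      congr 1
      rw [Finset.mul_sum]
      exact Finset.sum_congr rfl fun i _ => by ring
    rw [h1, h2]
    have h3 : HasFDerivAt (fun y : EuclideanSpace ℝ (Fin n) => y j)
        (EuclideanSpace.proj (𝕜 := ℝ) j) x := (EuclideanSpace.proj (𝕜 := ℝ) j).hasFDerivAt
    exact (hQ x).mul h3

lemma gradP_single {n : ℕ} (Q : MvPolynomial (Fin n) ℝ) (x : EuclideanSpace ℝ (Fin n)) (i : Fin n) :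
    gradP Q x (EuclideanSpace.single i 1) = evalP (MvPolynomial.pderiv i Q) x := by
  rw [gradP_apply]
  classical
  rw [Finset.sum_eq_single i (fun j _ hji => by
    simp only [EuclideanSpace.single_apply, if_neg hji, mul_zero]) (by simp)]
  simp [EuclideanSpace.single_apply]

lemma fderiv_evalP {n : ℕ} (Q : MvPolynomial (Fin n) ℝ) (x : EuclideanSpace ℝ (Fin n)) (i : Fin n) :
    fderiv ℝ (evalP Q) x (EuclideanSpace.single i 1) = evalP (MvPolynomial.pderiv i Q) x := by
  rw [(hasFDerivAt_evalP Q x).fderiv, gradP_single]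

lemma contDiff_evalP {n : ℕ} (Q : MvPolynomial (Fin n) ℝ) :
    ContDiff ℝ ⊤ (evalP Q) := by
  induction Q using MvPolynomial.induction_on with
  | C a =>
    have : evalP (n := n) (C a) = fun _ => a := by funext y; simp [evalP]
    rw [this]; exact contDiff_const
  | add Q R hQ hR =>
    have : evalP (Q + R) = fun y => evalP Q y + evalP R y := by funext y; simp [evalP]
    rw [this]; exact hQ.add hR
  | mul_X Q j hQ =>
    have : evalP (Q * X j) = fun y => evalP Q y * y j := by funext y; simp [evalP]
    rw [this]
    exact hQ.mul (EuclideanSpace.proj (𝕜 := ℝ) j).contDiff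

lemma euler_monomial {n : ℕ} (d : Fin n →₀ ℕ) (c : ℝ) :
    ∑ i : Fin n, X i * MvPolynomial.pderiv i (MvPolynomial.monomial d c) =
      MvPolynomial.C ((∑ i : Fin n, d i : ℕ) : ℝ) * MvPolynomial.monomial d c := by
  have key : ∀ i : Fin n, X i * MvPolynomial.pderiv i (MvPolynomial.monomial d c) =
      MvPolynomial.C ((d i : ℕ) : ℝ) * MvPolynomial.monomial d c := by
    intro i
    rcases Nat.eq_zero_or_pos (d i) with h | h
    · simp [pderiv_monomial, h]
    · rw [pderiv_monomial, X, monomial_mul, one_mul]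
      have hd : Finsupp.single i 1 + (d - Finsupp.single i 1) = d := by
        ext j
        rcases eq_or_ne j i with rfl | hj
        · simp only [Finsupp.add_apply, Finsupp.tsub_apply, Finsupp.single_eq_same]
          omega
        · simp [Finsupp.single_apply, (Ne.symm hj)]
      rw [hd, C_mul_monomial, mul_comm]
  rw [Finset.sum_congr rfl fun i _ => key i, ← Finset.sum_mul, ← map_sum, Nat.cast_sum]

lemma euler_poly {n k : ℕ} {P : MvPolynomial (Fin n) ℝ} (hP : P.IsHomogeneous k) :
    ∑ i : Fin n, X i * MvPolynomial.pderiv i P = MvPolynomial.C (k : ℝ) * P := by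
  conv_lhs => rw [← P.support_sum_monomial_coeff]
  conv_rhs => rw [← P.support_sum_monomial_coeff]
  rw [Finset.mul_sum]
  simp_rw [map_sum, Finset.mul_sum]
  rw [Finset.sum_comm]
  apply Finset.sum_congr rfl
  intro d hd
  rw [euler_monomial]
  congr 2
  have h1 := hP (Finsupp.mem_support_iff.mp hd)
  rw [← h1, Finsupp.weight_apply, Finsupp.sum_fintype]
  · simp
  · simp

lemma hasFDerivAt_norm_rpow {n : ℕ} (c : ℝ) {x : EuclideanSpace ℝ (Fin n)} (hx : x ≠ 0) :
    HasFDerivAt (fun y : EuclideanSpace ℝ (Fin n) => ‖y‖ ^ c)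
      ((c * ‖x‖ ^ (c - 2)) • (innerSL ℝ x)) x := by
  have hnx : ‖x‖ ≠ 0 := norm_ne_zero_iff.mpr hx
  have hfun : (fun y : EuclideanSpace ℝ (Fin n) => ‖y‖ ^ c)
      = fun y => (‖y‖ ^ 2) ^ (c / 2) := by
    funext y
    rw [← Real.rpow_natCast ‖y‖ 2, ← Real.rpow_mul (norm_nonneg y)]
    norm_num
    congr 1
    ring
  have hsq : HasFDerivAt (fun y : EuclideanSpace ℝ (Fin n) => ‖y‖ ^ 2)
      (2 • innerSL ℝ x) x := (hasStrictFDerivAt_norm_sq x).hasFDerivAt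
  have hne : (‖x‖ : ℝ) ^ 2 ≠ 0 := pow_ne_zero 2 hnx
  have hr : HasDerivAt (fun t : ℝ => t ^ (c / 2)) ((c / 2) * (‖x‖ ^ 2) ^ (c / 2 - 1)) (‖x‖ ^ 2) :=
    Real.hasDerivAt_rpow_const (Or.inl hne)
  have hcomp := hr.comp_hasFDerivAt x hsq
  rw [hfun]
  refine HasFDerivAt.congr_fderiv hcomp ?_
  ext v
  rw [two_smul]
  simp only [ContinuousLinearMap.coe_smul', Pi.smul_apply, smul_eq_mul,
    ContinuousLinearMap.add_apply]
  have h2 : ((‖x‖ : ℝ) ^ 2) ^ (c / 2 - 1) = ‖x‖ ^ (c - 2) := by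
    rw [← Real.rpow_natCast ‖x‖ 2, ← Real.rpow_mul (norm_nonneg x)]
    norm_num
    ring_nf
  rw [h2]
  ring

end Statement16Aux

open Statement16Aux MvPolynomial

/-- for a homogeneous harmonic polynomial `p` of degree `k ≥ 1` on `ℝⁿ`
(`n ≥ 2`), the function `H(x) = (1 − ‖x‖^(2−n−2k)) p(x)` (difference of `p` and its Kelvin
transform) is harmonic away from the origin and vanishes on the unit sphere. -/
theorem statement16 (n k : ℕ) (hn : 2 ≤ n) (hk : 1 ≤ k)
    (p : EuclideanSpace ℝ (Fin n) → ℝ)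
    (hpoly : ∃ P : MvPolynomial (Fin n) ℝ, P.IsHomogeneous k ∧
      ∀ x : EuclideanSpace ℝ (Fin n), p x = MvPolynomial.eval (fun i => x i) P)
    (hharm : IsHarmonicOn p Set.univ) :
    IsHarmonicOn (fun x => (1 - ‖x‖ ^ ((2 : ℝ) - n - 2 * k)) * p x)
      {x : EuclideanSpace ℝ (Fin n) | x ≠ 0} ∧
    ∀ x : EuclideanSpace ℝ (Fin n), ‖x‖ = 1 →
      (1 - ‖x‖ ^ ((2 : ℝ) - n - 2 * k)) * p x = 0 := by
  obtain ⟨P, hPhom, hPeq⟩ := hpoly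
  have hpe : p = evalP P := funext fun x => hPeq x
  subst hpe
  set a : ℝ := (2 : ℝ) - n - 2 * k with ha
  refine ⟨⟨?_, ?_⟩, ?_⟩
  · -- ContDiffOn
    apply ContDiffOn.mul
    · apply ContDiffOn.sub contDiffOn_const
      intro x hx
      have hx0 : x ≠ 0 := hx
      exact (((contDiffAt_norm (𝕜 := ℝ) hx0).rpow_const_of_ne
        (norm_ne_zero_iff.mpr hx0))).contDiffWithinAt
    · exact ((contDiff_evalP P).of_le le_top).contDiffOn
  · -- Laplacian vanishes
    intro x hx
    have hx0 : x ≠ 0 := hx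
    have hxpos : (0:ℝ) < ‖x‖ := norm_pos_iff.mpr hx0
    have hproj : ∀ j : Fin n, HasFDerivAt (fun y : EuclideanSpace ℝ (Fin n) => y j)
        (EuclideanSpace.proj (𝕜 := ℝ) j) x := fun j => (EuclideanSpace.proj (𝕜 := ℝ) j).hasFDerivAt
    have hA1 : ∀ y : EuclideanSpace ℝ (Fin n), y ≠ 0 →
        HasFDerivAt (fun z : EuclideanSpace ℝ (Fin n) => 1 - ‖z‖ ^ a)
          ((0 : EuclideanSpace ℝ (Fin n) →L[ℝ] ℝ) - (a * ‖y‖ ^ (a-2)) • innerSL ℝ y) y :=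
      fun y hy => (hasFDerivAt_const (1:ℝ) y).sub (hasFDerivAt_norm_rpow a hy)
    have hH : ∀ y : EuclideanSpace ℝ (Fin n), y ≠ 0 →
        HasFDerivAt (fun z => (1 - ‖z‖ ^ a) * evalP P z)
          ((1 - ‖y‖ ^ a) • gradP P y + evalP P y •
            ((0 : EuclideanSpace ℝ (Fin n) →L[ℝ] ℝ) - (a * ‖y‖ ^ (a-2)) • innerSL ℝ y)) y :=
      fun y hy => (hA1 y hy).mul (hasFDerivAt_evalP P y)
    have heq : ∀ i : Fin n, ∀ y : EuclideanSpace ℝ (Fin n), y ≠ 0 →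
        fderiv ℝ (fun z => (1 - ‖z‖ ^ a) * evalP P z) y (EuclideanSpace.single i 1)
          = (1 - ‖y‖ ^ a) * evalP (MvPolynomial.pderiv i P) y
            + evalP P y * (-(a * ‖y‖ ^ (a-2)) * y i) := by
      intro i y hy
      rw [(hH y hy).fderiv]
      simp only [ContinuousLinearMap.add_apply, ContinuousLinearMap.coe_smul', Pi.smul_apply,
        smul_eq_mul, ContinuousLinearMap.sub_apply, ContinuousLinearMap.zero_apply,
        innerSL_apply_apply, gradP_single]
      rw [EuclideanSpace.inner_single_right]
      simp only [RCLike.star_def, conj_trivial, one_mul]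
      ring
    have hmem : {y : EuclideanSpace ℝ (Fin n) | y ≠ 0} ∈ nhds x :=
      isOpen_ne.mem_nhds hx0
    have hT : ∀ i : Fin n,
        fderiv ℝ (fun y => fderiv ℝ (fun z => (1 - ‖z‖ ^ a) * evalP P z) y
            (EuclideanSpace.single i 1)) x (EuclideanSpace.single i 1)
        = -(2*a*‖x‖^(a-2)) * (x i * evalP (MvPolynomial.pderiv i P) x)
          + (1-‖x‖^a) * evalP (MvPolynomial.pderiv i (MvPolynomial.pderiv i P)) x
          + (-(a*(a-2)*‖x‖^(a-2-2) * evalP P x)) * (x i * x i)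
          + (-(a*‖x‖^(a-2) * evalP P x)) := by
      intro i
      have hEv : (fun y => fderiv ℝ (fun z => (1 - ‖z‖ ^ a) * evalP P z) y
            (EuclideanSpace.single i 1))
          =ᶠ[nhds x] (fun y => (1 - ‖y‖ ^ a) * evalP (MvPolynomial.pderiv i P) y
            + evalP P y * (-(a * ‖y‖ ^ (a-2)) * y i)) :=
        Filter.eventually_of_mem hmem fun y hy => heq i y hy
      rw [hEv.fderiv_eq]
      have hB := (((hasFDerivAt_norm_rpow (a-2) hx0).const_mul a).neg).mul (hproj i)
      have hphi := ((hA1 x hx0).mul (hasFDerivAt_evalP (MvPolynomial.pderiv i P) x)).add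
        ((hasFDerivAt_evalP P x).mul hB)
      rw [HasFDerivAt.fderiv (f := fun y => (1 - ‖y‖ ^ a) * evalP (MvPolynomial.pderiv i P) y
          + evalP P y * (-(a * ‖y‖ ^ (a-2)) * y i)) hphi]
      simp only [ContinuousLinearMap.add_apply, ContinuousLinearMap.coe_smul', Pi.smul_apply,
        smul_eq_mul, ContinuousLinearMap.sub_apply, ContinuousLinearMap.zero_apply,
        ContinuousLinearMap.neg_apply, innerSL_apply_apply, gradP_single, PiLp.proj_apply,
        EuclideanSpace.single_apply, eq_self_iff_true, if_true, Pi.neg_apply, Pi.mul_apply]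
      rw [EuclideanSpace.inner_single_right]
      simp only [RCLike.star_def, conj_trivial, one_mul]
      ring
    have hEuler : ∑ i : Fin n, x i * evalP (MvPolynomial.pderiv i P) x
        = (k:ℝ) * evalP P x := by
      have h0 := congrArg (MvPolynomial.eval (fun i => x i)) (euler_poly hPhom)
      simpa [evalP, map_sum] using h0
    have hLap : ∑ i : Fin n, evalP (MvPolynomial.pderiv i (MvPolynomial.pderiv i P)) x = 0 := by
      have h0 := hharm.2 x (Set.mem_univ x)
      have h2 : ∀ i : Fin n, fderiv ℝ (fun y => fderiv ℝ (evalP P) y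
          (EuclideanSpace.single i 1)) x (EuclideanSpace.single i 1)
          = evalP (MvPolynomial.pderiv i (MvPolynomial.pderiv i P)) x := by
        intro i
        have h1 : (fun y => fderiv ℝ (evalP P) y (EuclideanSpace.single i 1))
            = evalP (MvPolynomial.pderiv i P) := funext fun y => fderiv_evalP P y i
        rw [h1, fderiv_evalP]
      rw [← h0]
      exact Finset.sum_congr rfl fun i _ => (h2 i).symm
    have hsum : ∑ i : Fin n, x i * x i = ‖x‖^2 := by
      rw [← real_inner_self_eq_norm_sq x, PiLp.inner_apply]
      simp [RCLike.inner_apply, conj_trivial, sq]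
    have r4 : ‖x‖ ^ (a-2-2) * ‖x‖^(2:ℕ) = ‖x‖^(a-2) := by
      rw [← Real.rpow_natCast ‖x‖ 2, ← Real.rpow_add hxpos]
      norm_num
    rw [Finset.sum_congr rfl fun i _ => hT i]
    rw [Finset.sum_add_distrib, Finset.sum_add_distrib, Finset.sum_add_distrib,
      ← Finset.mul_sum, ← Finset.mul_sum, ← Finset.mul_sum, Finset.sum_const,
      Finset.card_univ, Fintype.card_fin, nsmul_eq_mul, hEuler, hLap, hsum]
    linear_combination (-(a*(a-2)*evalP P x)) * r4 + (-(a*‖x‖^(a-2)*evalP P x)) * ha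
  · -- vanishing on sphere
    intro x hx
    rw [hx, Real.one_rpow, sub_self, zero_mul]
end
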